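/- arXiv:1808.01767 — 2 statements merged into one kernel-verified Lean document; each statement's English description precedes it below -/
import Mathlib

section
/- Let (G,X,H) be an uncolorable degree-feasible configuration. Then every hyperedge e of G (an edge with |i_G(e)| ≥ 3) is a bridge of G; consequently ⟨e⟩ (the subhypergraph with vertex set i_G(e) and single edge e) is a block of G, and G has no parallel hyperedges. -/
open Finset

noncomputable section
open scoped Classical

structure FinHypergraph (α : Type) where
  verts : Finset α
  edges : Finset ℕ
  inc : ℕ → Finset α
  inc_sub : ∀ e ∈ edges, inc e ⊆ verts
  inc_card : ∀ e ∈ edges, 2 ≤ (inc e).card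

variable {α β : Type} [DecidableEq α] [DecidableEq β]

namespace FinHypergraph

def degree (G : FinHypergraph α) (v : α) : ℕ :=
  (G.edges.filter (fun e => v ∈ G.inc e)).card

def maxDegree (G : FinHypergraph α) : ℕ := G.verts.sup G.degree

def mult (G : FinHypergraph α) (u v : α) : ℕ :=
  (G.edges.filter (fun e => G.inc e = {u, v})).card

def Adj (G : FinHypergraph α) (u v : α) : Prop :=
  u ≠ v ∧ ∃ e ∈ G.edges, u ∈ G.inc e ∧ v ∈ G.inc e

def Connected (G : FinHypergraph α) : Prop :=
  ∀ u ∈ G.verts, ∀ v ∈ G.verts, Relation.ReflTransGen G.Adj u v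

def IndepSet (H : FinHypergraph β) (S : Finset β) : Prop :=
  ∀ e ∈ H.edges, ¬ H.inc e ⊆ S

def eraseEdge (H : FinHypergraph β) (e₀ : ℕ) : FinHypergraph β where
  verts := H.verts
  edges := H.edges.erase e₀
  inc := H.inc
  inc_sub := fun e he => H.inc_sub e (Finset.mem_of_mem_erase he)
  inc_card := fun e he => H.inc_card e (Finset.mem_of_mem_erase he)

def induce (G : FinHypergraph α) (S : Finset α) : FinHypergraph α where
  verts := S
  edges := G.edges.filter (fun e => G.inc e ⊆ S)
  inc := G.inc
  inc_sub := fun e he => (Finset.mem_filter.mp he).2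
  inc_card := fun e he => G.inc_card e (Finset.mem_filter.mp he).1

def IsSub (G' G : FinHypergraph α) : Prop :=
  G'.verts ⊆ G.verts ∧ G'.edges ⊆ G.edges ∧ ∀ e ∈ G'.edges, G'.inc e = G.inc e

def shrink (G : FinHypergraph α) (v : α) : FinHypergraph α where
  verts := G.verts.erase v
  edges := G.edges.filter (fun e => 2 ≤ ((G.inc e).erase v).card)
  inc := fun e => (G.inc e).erase v
  inc_sub := by
    intro e he y hy
    rw [Finset.mem_erase] at hy ⊢
    exact ⟨hy.1, G.inc_sub e (Finset.mem_filter.mp he).1 hy.2⟩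
  inc_card := fun e he => (Finset.mem_filter.mp he).2

def nbhd (H : FinHypergraph β) (x : β) : Finset β :=
  H.verts.filter (fun y => ∃ e ∈ H.edges, H.inc e = {x, y})

def numComponents (G : FinHypergraph α) : ℕ :=
  (G.verts.image (fun v => G.verts.filter (fun u => Relation.ReflTransGen G.Adj v u))).card

def IsBridge (G : FinHypergraph α) (e : ℕ) : Prop :=
  numComponents (G.eraseEdge e) = numComponents G + ((G.inc e).card - 1)

def IsSepVertex (G : FinHypergraph α) (v : α) : Prop :=
  ∃ A B : Finset α, A ∪ B = G.verts ∧ A ∩ B = {v} ∧ 2 ≤ A.card ∧ 2 ≤ B.card ∧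
    ∀ e ∈ G.edges, G.inc e ⊆ A ∨ G.inc e ⊆ B

def IsBlock (G : FinHypergraph α) (S : Finset α) : Prop :=
  S ⊆ G.verts ∧ (G.induce S).Connected ∧ (∀ v, ¬ IsSepVertex (G.induce S) v) ∧
    ∀ S' : Finset α, S ⊆ S' → S' ⊆ G.verts → (G.induce S').Connected →
      (∀ v, ¬ IsSepVertex (G.induce S') v) → S' = S

end FinHypergraph

open FinHypergraph

def IsCover (G : FinHypergraph α) (X : α → Finset β) (H : FinHypergraph β) : Prop :=
  (∀ u ∈ G.verts, ∀ v ∈ G.verts, u ≠ v → Disjoint (X u) (X v)) ∧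
  H.verts = G.verts.biUnion X ∧
  (∀ v ∈ G.verts, H.IndepSet (X v)) ∧
  ∃ M : ℕ → Finset ℕ,
    (∀ e ∈ G.edges,
      M e ⊆ H.edges ∧
      (∀ e' ∈ M e, (∀ v ∈ G.inc e, (H.inc e' ∩ X v).card = 1) ∧
        H.inc e' ⊆ (G.inc e).biUnion X) ∧
      ∀ e₁ ∈ M e, ∀ e₂ ∈ M e, e₁ ≠ e₂ → Disjoint (H.inc e₁) (H.inc e₂)) ∧
    H.edges = G.edges.biUnion M

def HasIT (H : FinHypergraph β) (Vs : Finset α) (X : α → Finset β) : Prop :=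
  ∃ T : Finset β, H.IndepSet T ∧ ∀ v ∈ Vs, (T ∩ X v).card = 1

def MinUncol (H : FinHypergraph β) (Vs : Finset α) (X : α → Finset β) : Prop :=
  ¬ HasIT H Vs X ∧ ∀ e ∈ H.edges, HasIT (H.eraseEdge e) Vs X

def DPColorableAt (G : FinHypergraph α) (k : ℕ) : Prop :=
  ∀ (X : α → Finset ℕ) (H : FinHypergraph ℕ),
    IsCover G X H → (∀ v ∈ G.verts, k ≤ (X v).card) → HasIT H G.verts X

def chiDP (G : FinHypergraph α) : ℕ := sInf {k | DPColorableAt G k}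

def DPDegreeColorable (G : FinHypergraph α) : Prop :=
  ∀ (X : α → Finset ℕ) (H : FinHypergraph ℕ),
    IsCover G X H → (∀ v ∈ G.verts, G.degree v ≤ (X v).card) → HasIT H G.verts X

def colNum (G : FinHypergraph α) : ℕ :=
  sInf {k | ∀ G' : FinHypergraph α, G'.IsSub G → G'.verts.Nonempty →
    ∃ v ∈ G'.verts, G'.degree v ≤ k}

def ProperColoring (G : FinHypergraph α) (φ : α → ℕ) : Prop :=
  ∀ e ∈ G.edges, ∃ u ∈ G.inc e, ∃ v ∈ G.inc e, φ u ≠ φ v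

def LColorable (G : FinHypergraph α) (L : α → Finset ℕ) : Prop :=
  ∃ φ : α → ℕ, ProperColoring G φ ∧ ∀ v ∈ G.verts, φ v ∈ L v

def chiList (G : FinHypergraph α) : ℕ :=
  sInf {k | ∀ L : α → Finset ℕ, (∀ v ∈ G.verts, k ≤ (L v).card) → LColorable G L}

def IsTKn (B : FinHypergraph α) (t n : ℕ) : Prop :=
  1 ≤ n ∧ B.verts.card = n ∧ (∀ e ∈ B.edges, (B.inc e).card = 2) ∧
  ∀ u ∈ B.verts, ∀ v ∈ B.verts, u ≠ v → B.mult u v = t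

def IsTCn (B : FinHypergraph α) (t n : ℕ) : Prop :=
  3 ≤ n ∧ B.verts.card = n ∧ (∀ e ∈ B.edges, (B.inc e).card = 2) ∧
  ∃ f : ℕ → α,
    B.verts = (Finset.range n).image f ∧
    (∀ i < n, ∀ j < n, i ≠ j → f i ≠ f j) ∧
    ∀ i < n, ∀ j < n, i ≠ j →
      B.mult (f i) (f j) = if j = (i + 1) % n ∨ i = (j + 1) % n then t else 0

def IsDPHyperbrick (B : FinHypergraph α) : Prop :=
  (∃ t n, 1 ≤ t ∧ 1 ≤ n ∧ IsTKn B t n) ∨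
  (∃ t n, 1 ≤ t ∧ 3 ≤ n ∧ IsTCn B t n) ∨
  (∃ e ∈ B.edges, B.verts = B.inc e ∧ B.edges = {e})

def AdjPair (G : FinHypergraph α) (u v : α) : Prop :=
  u ≠ v ∧ ∃ e ∈ G.edges, G.inc e = {u, v}

def IsKConfig (G : FinHypergraph α) (X : α → Finset β) (H : FinHypergraph β) (t n : ℕ) : Prop :=
  1 ≤ t ∧ 1 ≤ n ∧ IsTKn G t n ∧ IsCover G X H ∧
  ∃ P : α → ℕ → Finset β,
    (∀ v ∈ G.verts, ∀ i ∈ Finset.range (n - 1), ∀ j ∈ Finset.range (n - 1),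
      i ≠ j → Disjoint (P v i) (P v j)) ∧
    (∀ v ∈ G.verts, X v = (Finset.range (n - 1)).biUnion (P v)) ∧
    (∀ v ∈ G.verts, ∀ i ∈ Finset.range (n - 1), (P v i).card = t) ∧
    (∀ i ∈ Finset.range (n - 1), ∀ u ∈ G.verts, ∀ v ∈ G.verts, u ≠ v →
      ∀ x ∈ P u i, ∀ y ∈ P v i, ∃ e ∈ H.edges, H.inc e = {x, y}) ∧
    (∀ e ∈ H.edges, ∃ i ∈ Finset.range (n - 1), ∃ u ∈ G.verts, ∃ v ∈ G.verts,
      u ≠ v ∧ ∃ x ∈ P u i, ∃ y ∈ P v i, H.inc e = {x, y})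

def IsOddCConfig (G : FinHypergraph α) (X : α → Finset β) (H : FinHypergraph β) (t n : ℕ) : Prop :=
  1 ≤ t ∧ 5 ≤ n ∧ Odd n ∧ IsTCn G t n ∧ IsCover G X H ∧
  ∃ P : α → ℕ → Finset β,
    (∀ v ∈ G.verts, Disjoint (P v 0) (P v 1)) ∧
    (∀ v ∈ G.verts, X v = P v 0 ∪ P v 1) ∧
    (∀ v ∈ G.verts, (P v 0).card = t ∧ (P v 1).card = t) ∧
    (∀ i ∈ ({0, 1} : Finset ℕ), ∀ u ∈ G.verts, ∀ v ∈ G.verts, AdjPair G u v →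
      ∀ x ∈ P u i, ∀ y ∈ P v i, ∃ e ∈ H.edges, H.inc e = {x, y}) ∧
    (∀ e ∈ H.edges, ∃ i ∈ ({0, 1} : Finset ℕ), ∃ u ∈ G.verts, ∃ v ∈ G.verts,
      AdjPair G u v ∧ ∃ x ∈ P u i, ∃ y ∈ P v i, H.inc e = {x, y})

def IsEvenCConfig (G : FinHypergraph α) (X : α → Finset β) (H : FinHypergraph β) (t n : ℕ) : Prop :=
  1 ≤ t ∧ 4 ≤ n ∧ Even n ∧ IsTCn G t n ∧ IsCover G X H ∧
  ∃ P : α → ℕ → Finset β, ∃ w w' : α, w ∈ G.verts ∧ w' ∈ G.verts ∧ AdjPair G w w' ∧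
    (∀ v ∈ G.verts, Disjoint (P v 0) (P v 1)) ∧
    (∀ v ∈ G.verts, X v = P v 0 ∪ P v 1) ∧
    (∀ v ∈ G.verts, (P v 0).card = t ∧ (P v 1).card = t) ∧
    (∀ i ∈ ({0, 1} : Finset ℕ), ∀ u ∈ G.verts, ∀ v ∈ G.verts, AdjPair G u v →
      ({u, v} : Finset α) ≠ {w, w'} →
      ∀ x ∈ P u i, ∀ y ∈ P v i, ∃ e ∈ H.edges, H.inc e = {x, y}) ∧
    (∀ x ∈ P w 0, ∀ y ∈ P w' 1, ∃ e ∈ H.edges, H.inc e = {x, y}) ∧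
    (∀ x ∈ P w 1, ∀ y ∈ P w' 0, ∃ e ∈ H.edges, H.inc e = {x, y}) ∧
    (∀ e ∈ H.edges, ∃ x y : β, H.inc e = {x, y} ∧
      ((∃ i ∈ ({0, 1} : Finset ℕ), ∃ u ∈ G.verts, ∃ v ∈ G.verts,
        AdjPair G u v ∧ ({u, v} : Finset α) ≠ {w, w'} ∧ x ∈ P u i ∧ y ∈ P v i) ∨
       (x ∈ P w 0 ∧ y ∈ P w' 1) ∨ (x ∈ P w 1 ∧ y ∈ P w' 0)))

def IsEConfig (G : FinHypergraph α) (X : α → Finset β) (H : FinHypergraph β) : Prop :=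
  (∃ e₀ ∈ G.edges, G.edges = {e₀} ∧ G.verts = G.inc e₀) ∧
  IsCover G X H ∧ (∀ v ∈ G.verts, (X v).card = 1) ∧
  ∃ e₁ ∈ H.edges, H.edges = {e₁} ∧ H.inc e₁ = G.verts.biUnion X

def IsMergeOf (G : FinHypergraph α) (X : α → Finset β) (H : FinHypergraph β)
    (G₁ : FinHypergraph α) (X₁ : α → Finset β) (H₁ : FinHypergraph β)
    (G₂ : FinHypergraph α) (X₂ : α → Finset β) (H₂ : FinHypergraph β)
    (v₁ v₂ vs : α) : Prop :=
  Disjoint G₁.verts G₂.verts ∧ Disjoint G₁.edges G₂.edges ∧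
  Disjoint H₁.verts H₂.verts ∧ Disjoint H₁.edges H₂.edges ∧
  v₁ ∈ G₁.verts ∧ v₂ ∈ G₂.verts ∧ vs ∉ G₁.verts ∪ G₂.verts ∧
  G.verts = insert vs (((G₁.verts ∪ G₂.verts).erase v₁).erase v₂) ∧
  G.edges = G₁.edges ∪ G₂.edges ∧
  (∀ e ∈ G₁.edges, G.inc e =
    if v₁ ∈ G₁.inc e then insert vs ((G₁.inc e).erase v₁) else G₁.inc e) ∧
  (∀ e ∈ G₂.edges, G.inc e =
    if v₂ ∈ G₂.inc e then insert vs ((G₂.inc e).erase v₂) else G₂.inc e) ∧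
  H.verts = H₁.verts ∪ H₂.verts ∧ H.edges = H₁.edges ∪ H₂.edges ∧
  (∀ e ∈ H₁.edges, H.inc e = H₁.inc e) ∧ (∀ e ∈ H₂.edges, H.inc e = H₂.inc e) ∧
  X vs = X₁ v₁ ∪ X₂ v₂ ∧
  (∀ u ∈ G₁.verts.erase v₁, X u = X₁ u) ∧ (∀ u ∈ G₂.verts.erase v₂, X u = X₂ u)

inductive Constructible : FinHypergraph α → (α → Finset β) → FinHypergraph β → Prop where
  | K : ∀ {G : FinHypergraph α} {X : α → Finset β} {H : FinHypergraph β} {t n : ℕ},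
      IsKConfig G X H t n → Constructible G X H
  | Codd : ∀ {G : FinHypergraph α} {X : α → Finset β} {H : FinHypergraph β} {t n : ℕ},
      IsOddCConfig G X H t n → Constructible G X H
  | Ceven : ∀ {G : FinHypergraph α} {X : α → Finset β} {H : FinHypergraph β} {t n : ℕ},
      IsEvenCConfig G X H t n → Constructible G X H
  | E : ∀ {G : FinHypergraph α} {X : α → Finset β} {H : FinHypergraph β},
      IsEConfig G X H → Constructible G X H
  | merge : ∀ {G G₁ G₂ : FinHypergraph α} {X X₁ X₂ : α → Finset β} {H H₁ H₂ : FinHypergraph β}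
      {v₁ v₂ vs : α},
      Constructible G₁ X₁ H₁ → Constructible G₂ X₂ H₂ →
      IsMergeOf G X H G₁ X₁ H₁ G₂ X₂ H₂ v₁ v₂ vs → Constructible G X H

def reducedVerts (G : FinHypergraph α) (X : α → Finset β) (H : FinHypergraph β)
    (v : α) (x : β) : Finset β :=
  (G.shrink v).verts.biUnion (fun u => X u \ H.nbhd x)

def reduceH (G : FinHypergraph α) (X : α → Finset β) (H : FinHypergraph β)
    (v : α) (x : β) : FinHypergraph β where
  verts := reducedVerts G X H v x
  edges := H.edges.filter (fun e =>
    2 ≤ ((H.inc e).erase x).card ∧ (H.inc e).erase x ⊆ reducedVerts G X H v x)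
  inc := fun e => (H.inc e).erase x
  inc_sub := fun e he => (Finset.mem_filter.mp he).2.2
  inc_card := fun e he => (Finset.mem_filter.mp he).2.1

section BridgeDev

lemma nodup_split_unique {v : α} :
    ∀ {l1 l1' l2 l2' : List α},
      l1 ++ v :: l2 = l1' ++ v :: l2' → (l1 ++ v :: l2).Nodup → l2 = l2' := by
  intro l1
  induction l1 with
  | nil =>
    intro l1' l2 l2' h hnd
    cases l1' with
    | nil => simpa using h
    | cons a t =>
      simp only [List.nil_append, List.cons_append, List.cons.injEq] at h
      obtain ⟨rfl, h2⟩ := h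
      exfalso
      rw [List.nil_append, List.nodup_cons] at hnd
      exact hnd.1 (by rw [h2]; simp)
  | cons a t ih =>
    intro l1' l2 l2' h hnd
    cases l1' with
    | nil =>
      simp only [List.cons_append, List.nil_append, List.cons.injEq] at h
      obtain ⟨rfl, h2⟩ := h
      exfalso
      rw [List.cons_append, List.nodup_cons] at hnd
      exact hnd.1 (by simp)
    | cons b t' =>
      simp only [List.cons_append, List.cons.injEq] at h
      obtain ⟨rfl, h2⟩ := h
      rw [List.cons_append, List.nodup_cons] at hnd
      exact ih h2 hnd.2

lemma adj_symm (G : FinHypergraph α) : Symmetric G.Adj :=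
  fun _ _ ⟨h1, e, he, hu, hv⟩ => ⟨h1.symm, e, he, hv, hu⟩

lemma erase_adj_def {G : FinHypergraph α} {e : ℕ} {u v : α} :
    (G.eraseEdge e).Adj u v ↔ u ≠ v ∧ ∃ f ∈ G.edges.erase e, u ∈ G.inc f ∧ v ∈ G.inc f :=
  Iff.rfl

/-- every vertex reaches a vertex of `inc e` in `G - e`. -/
lemma reach_inc (G : FinHypergraph α) (hG : G.Connected) (e : ℕ) (he : e ∈ G.edges)
    (hne : (G.inc e).Nonempty) :
    ∀ x ∈ G.verts, ∃ y ∈ G.inc e, Relation.ReflTransGen (G.eraseEdge e).Adj x y := by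
  obtain ⟨v0, hv0⟩ := hne
  have hv0v : v0 ∈ G.verts := G.inc_sub e he hv0
  intro x hx
  have hpath := hG x hx v0 hv0v
  clear hx
  induction hpath using Relation.ReflTransGen.head_induction_on with
  | refl => exact ⟨v0, hv0, Relation.ReflTransGen.refl⟩
  | head hstep _ ih =>
    obtain ⟨hne', f, hf, haf, hcf⟩ := hstep
    by_cases hfe : f = e
    · exact ⟨_, hfe ▸ haf, Relation.ReflTransGen.refl⟩
    · obtain ⟨y, hy, hp⟩ := ih
      exact ⟨y, hy, Relation.ReflTransGen.head
        ⟨hne', f, Finset.mem_erase.mpr ⟨hfe, hf⟩, haf, hcf⟩ hp⟩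

lemma subset_of_card_one_mem {A T : Finset β} {a : β} (h1 : A.card = 1) (ha : a ∈ A)
    (haT : a ∈ T) : A ⊆ T := by
  intro b hb
  have := Finset.card_le_one.mp (le_of_eq h1) b hb a ha
  rwa [this]

end BridgeDev
section Greedy

set_option maxHeartbeats 1000000 in
lemma greedy_IT (G : FinHypergraph α) (X : α → Finset β) (H : FinHypergraph β)
    (hdisj : ∀ u ∈ G.verts, ∀ v ∈ G.verts, u ≠ v → Disjoint (X u) (X v))
    (M : ℕ → Finset ℕ)
    (hM : ∀ e ∈ G.edges,
      M e ⊆ H.edges ∧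
      (∀ e' ∈ M e, (∀ v ∈ G.inc e, (H.inc e' ∩ X v).card = 1) ∧
        H.inc e' ⊆ (G.inc e).biUnion X) ∧
      ∀ e₁ ∈ M e, ∀ e₂ ∈ M e, e₁ ≠ e₂ → Disjoint (H.inc e₁) (H.inc e₂))
    (hMall : H.edges = G.edges.biUnion M)
    (hdf : ∀ v ∈ G.verts, G.degree v ≤ (X v).card)
    (e : ℕ) (he : e ∈ G.edges)
    (p q s : α) (hpe : p ∈ G.inc e) (hqe : q ∈ G.inc e) (hse : s ∈ G.inc e)
    (hpq : p ≠ q) (hps : p ≠ s) (hqs : q ≠ s)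
    (L : List α) (hnd : L.Nodup) (hLV : L.toFinset = G.verts)
    (hstr : ∀ l1 v l2, L = l1 ++ v :: l2 →
      ((v ∉ G.inc e ∨ v = q) → ∃ w ∈ l2.toFinset, (G.eraseEdge e).Adj v w) ∧
      (v = p → q ∈ l2.toFinset ∨ ∃ w ∈ l2.toFinset, (G.eraseEdge e).Adj v w) ∧
      (v = s → l2 = [])) :
    HasIT H G.verts X := by
  have hvertmem : ∀ {x : β} {u u' : α}, u ∈ G.verts → u' ∈ G.verts → x ∈ X u → x ∈ X u' →
      u = u' := by
    intro x u u' hu hu' h1 h2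
    by_contra hne
    exact Finset.disjoint_left.mp (hdisj u hu u' hu' hne) h1 h2
  have hpv : p ∈ G.verts := G.inc_sub e he hpe
  have hqv : q ∈ G.verts := G.inc_sub e he hqe
  have hsv : s ∈ G.verts := G.inc_sub e he hse
  have hsmem : ∀ l1 (v : α) l2, L = l1 ++ v :: l2 → v ≠ s → s ∈ l2.toFinset := by
    intro l1 v l2 hL hvs
    have hsL : s ∈ L := by
      have : s ∈ L.toFinset := by rw [hLV]; exact hsv
      exact List.mem_toFinset.mp this
    rw [hL] at hsL
    rcases List.mem_append.mp hsL with h1 | h2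
    · obtain ⟨m1, m2, hm⟩ := List.append_of_mem h1
      exfalso
      have : L = m1 ++ s :: (m2 ++ v :: l2) := by rw [hL, hm]; simp
      have := (hstr m1 s (m2 ++ v :: l2) this).2.2 rfl
      simp at this
    · rcases List.mem_cons.mp h2 with h3 | h4
      · exact absurd h3.symm hvs
      · exact List.mem_toFinset.mpr h4
  suffices hsuf : ∀ (L2 : List α), ∀ (T : Finset β), L2 <:+ L →
      (∀ u ∈ G.verts, u ∉ L2.toFinset → (T ∩ X u).card = 1) →
      (∀ x ∈ T, ∃ u ∈ G.verts, u ∉ L2.toFinset ∧ x ∈ X u) →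
      H.IndepSet T →
      (∀ h ∈ M e, ¬(H.inc h ∩ X p ⊆ T ∧ H.inc h ∩ X q ⊆ T)) →
      ∃ T', H.IndepSet T' ∧ ∀ u ∈ G.verts, (T' ∩ X u).card = 1 by
    obtain ⟨T', h1, h2⟩ := hsuf L ∅ (List.suffix_refl L)
      (by intro u hu hun; rw [hLV] at hun; exact (hun hu).elim)
      (by intro x hx; simp at hx)
      (by
        intro h hh hsub
        have h2 := H.inc_card h hh
        rw [Finset.subset_empty] at hsub
        rw [hsub] at h2
        simp at h2)
      (by
        intro h hh hc
        have h1 : (H.inc h ∩ X q).card = 1 := ((hM e he).2.1 h hh).1 q hqe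
        obtain ⟨c, hc'⟩ := Finset.card_pos.mp (by rw [h1]; exact Nat.one_pos)
        have := hc.2 hc'
        simp at this)
    exact ⟨T', h1, fun u hu => h2 u hu⟩
  intro L2
  induction L2 with
  | nil =>
    intro T _ hT1 _ hindep _
    exact ⟨T, hindep, fun u hu => hT1 u hu (by simp)⟩
  | cons v L2' ih =>
    intro T hsuffix hT1 hT2 hindep hdodge
    obtain ⟨l1, hl1⟩ := id hsuffix
    have hL : L = l1 ++ v :: L2' := hl1.symm
    have hndL2 : (v :: L2').Nodup := hnd.sublist hsuffix.sublist
    have hvL2' : v ∉ L2' := (List.nodup_cons.mp hndL2).1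
    have hvL : v ∈ L := hsuffix.sublist.subset (by simp)
    have hvV : v ∈ G.verts := by rw [← hLV]; exact List.mem_toFinset.mpr hvL
    have hsuffix' : L2' <:+ L := ⟨l1 ++ [v], by simpa using hl1⟩
    have hmemverts : ∀ u ∈ (v :: L2').toFinset, u ∈ G.verts := by
      intro u hu
      rw [← hLV]
      exact List.mem_toFinset.mpr (hsuffix.sublist.subset (List.mem_toFinset.mp hu))
    have huncolT : ∀ u ∈ (v :: L2').toFinset, T ∩ X u = ∅ := by
      intro u hu
      by_contra hne
      obtain ⟨c, hc⟩ := Finset.nonempty_iff_ne_empty.mpr hne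
      obtain ⟨u', hu'v, hu'un, hcu'⟩ := hT2 c (Finset.mem_inter.mp hc).1
      have huv : u ∈ G.verts := hmemverts u hu
      have heq : u = u' := hvertmem huv hu'v (Finset.mem_inter.mp hc).2 hcu'
      exact hu'un (heq ▸ hu)
    have hstrv := hstr l1 v L2' hL
    -- the two finsets of excluded colors
    set bad : Finset β := (X v).filter (fun x => ∃ h ∈ H.edges, H.inc h ⊆ insert x T)
      with hbad_def
    set D : Finset β := (X v).filter (fun x => ∃ h ∈ M e, x ∈ H.inc h ∧
      ((v = q ∧ H.inc h ∩ X p ⊆ T) ∨ (v = p ∧ H.inc h ∩ X q ⊆ T))) with hD_def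
    set Ftar : Finset ℕ := G.edges.filter
      (fun f => v ∈ G.inc f ∧ ∀ u ∈ (G.inc f).erase v, u ∉ (v :: L2').toFinset)
      with hFtar_def
    set degset : Finset ℕ := G.edges.filter (fun f => v ∈ G.inc f) with hdeg_def
    have hdegcard : degset.card = G.degree v := rfl
    have hFsub : Ftar ⊆ degset := by
      intro f hf
      rw [hFtar_def, Finset.mem_filter] at hf
      rw [hdeg_def, Finset.mem_filter]
      exact ⟨hf.1, hf.2.1⟩
    -- main counting: existence of a good f for each bad color
    have hexf : ∀ x ∈ bad, ∃ f, f ∈ Ftar ∧ (v = s → f ≠ e) ∧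
        ∃ h ∈ M f, H.inc h ⊆ insert x T ∧ x ∈ H.inc h := by
      intro x hx
      rw [hbad_def, Finset.mem_filter] at hx
      obtain ⟨hxX, h, hhH, hhsub⟩ := hx
      have hxh : x ∈ H.inc h := by
        by_contra hxh
        apply hindep h hhH
        intro c hc
        rcases Finset.mem_insert.mp (hhsub hc) with h1 | h2
        · exact absurd (h1 ▸ hc) hxh
        · exact h2
      have hnotMe : v = s → h ∉ M e := by
        intro hvs hMe'
        have hcp1 : (H.inc h ∩ X p).card = 1 := ((hM e he).2.1 h hMe').1 p hpe
        have hcq1 : (H.inc h ∩ X q).card = 1 := ((hM e he).2.1 h hMe').1 q hqe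
        obtain ⟨cp, hcp⟩ := Finset.card_pos.mp (by rw [hcp1]; exact Nat.one_pos)
        obtain ⟨cq, hcq⟩ := Finset.card_pos.mp (by rw [hcq1]; exact Nat.one_pos)
        have hcpT : cp ∈ T := by
          rcases Finset.mem_insert.mp (hhsub (Finset.mem_inter.mp hcp).1) with h1 | h2
          · exfalso
            apply hps
            exact hvertmem hpv hsv (Finset.mem_inter.mp hcp).2
              (by rw [← hvs]; rw [h1]; exact hxX)
          · exact h2
        have hcqT : cq ∈ T := by
          rcases Finset.mem_insert.mp (hhsub (Finset.mem_inter.mp hcq).1) with h1 | h2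
          · exfalso
            apply hqs
            exact hvertmem hqv hsv (Finset.mem_inter.mp hcq).2
              (by rw [← hvs]; rw [h1]; exact hxX)
          · exact h2
        exact hdodge h hMe' ⟨subset_of_card_one_mem hcp1 hcp hcpT,
          subset_of_card_one_mem hcq1 hcq hcqT⟩
      obtain ⟨f, hfG, hhMf⟩ := Finset.mem_biUnion.mp (hMall ▸ hhH)
      have hfe : v = s → f ≠ e := fun hvs hfeq => hnotMe hvs (hfeq ▸ hhMf)
      have hvincf : v ∈ G.inc f := by
        have hsub2 := ((hM f hfG).2.1 h hhMf).2
        obtain ⟨u, huf, hxu⟩ := Finset.mem_biUnion.mp (hsub2 hxh)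
        have : u = v := hvertmem (G.inc_sub f hfG huf) hvV hxu hxX
        exact this ▸ huf
      have hcolored : ∀ u ∈ (G.inc f).erase v, u ∉ (v :: L2').toFinset := by
        intro u hu hucol
        obtain ⟨huv, huf⟩ := Finset.mem_erase.mp hu
        have huverts : u ∈ G.verts := G.inc_sub f hfG huf
        have hcu1 : (H.inc h ∩ X u).card = 1 := ((hM f hfG).2.1 h hhMf).1 u huf
        obtain ⟨c, hc⟩ := Finset.card_pos.mp (by rw [hcu1]; exact Nat.one_pos)
        have hcXu : c ∈ X u := (Finset.mem_inter.mp hc).2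
        have hcT : c ∈ T := by
          rcases Finset.mem_insert.mp (hhsub (Finset.mem_inter.mp hc).1) with h1 | h2
          · exact absurd (hvertmem huverts hvV hcXu (by rw [h1]; exact hxX)) huv
          · exact h2
        have hemp : T ∩ X u = ∅ := huncolT u hucol
        rw [Finset.eq_empty_iff_forall_notMem] at hemp
        exact hemp c (Finset.mem_inter.mpr ⟨hcT, hcXu⟩)
      exact ⟨f, by rw [hFtar_def, Finset.mem_filter]; exact ⟨hfG, hvincf, hcolored⟩,
        hfe, h, hhMf, hhsub, hxh⟩
    have hbadcount : ∀ A : Finset ℕ, (∀ x ∈ bad, ∃ f ∈ A, f ∈ Ftar ∧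
        ∃ h ∈ M f, H.inc h ⊆ insert x T ∧ x ∈ H.inc h) → bad.card ≤ A.card := by
      intro A hA
      set P : β → ℕ → Prop := fun x f => f ∈ A ∧ f ∈ Ftar ∧
        ∃ h ∈ M f, H.inc h ⊆ insert x T ∧ x ∈ H.inc h with hP_def
      set φ : β → ℕ := fun x => if hx : ∃ f, P x f then hx.choose else 0 with hφ_def
      have hspec : ∀ x ∈ bad, P x (φ x) := by
        intro x hx
        obtain ⟨f, hfA, hrest⟩ := hA x hx
        have hex : ∃ f, P x f := ⟨f, hfA, hrest⟩
        have : φ x = hex.choose := by rw [hφ_def]; exact dif_pos hex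
        rw [this]
        exact hex.choose_spec
      apply Finset.card_le_card_of_injOn φ (fun x hx => (hspec x hx).1)
      intro x hx x' hx' heq
      rw [Finset.mem_coe] at hx hx'
      obtain ⟨-, hfT, h, hhM, hsub, hxh⟩ := hspec x hx
      obtain ⟨-, hfT', h', hhM', hsub', hxh'⟩ := hspec x' hx'
      rw [← heq] at hhM' hfT'
      rw [hFtar_def, Finset.mem_filter] at hfT
      obtain ⟨hfG, hvf, hcol⟩ := hfT
      have hxXv : x ∈ X v := (Finset.mem_filter.mp (by rw [← hbad_def]; exact hx)).1
      have hxXv' : x' ∈ X v := (Finset.mem_filter.mp (by rw [← hbad_def]; exact hx')).1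
      by_cases hhh : h = h'
      · have hcv1 : (H.inc h ∩ X v).card = 1 := ((hM (φ x) hfG).2.1 h hhM).1 v hvf
        exact Finset.card_le_one.mp (le_of_eq hcv1) x
          (Finset.mem_inter.mpr ⟨hxh, hxXv⟩) x'
          (Finset.mem_inter.mpr ⟨hhh ▸ hxh', hxXv'⟩)
      · exfalso
        have hdisj' := (hM (φ x) hfG).2.2 h hhM h' hhM' hhh
        have hcard2 := G.inc_card (φ x) hfG
        have herase : 0 < ((G.inc (φ x)).erase v).card := by
          rw [Finset.card_erase_of_mem hvf]; omega
        obtain ⟨u, hu⟩ := Finset.card_pos.mp herase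
        obtain ⟨huv, huf⟩ := Finset.mem_erase.mp hu
        have hucol : u ∉ (v :: L2').toFinset := hcol u hu
        have huverts : u ∈ G.verts := G.inc_sub (φ x) hfG huf
        have hcu1 : (H.inc h ∩ X u).card = 1 := ((hM (φ x) hfG).2.1 h hhM).1 u huf
        have hcu1' : (H.inc h' ∩ X u).card = 1 := ((hM (φ x) hfG).2.1 h' hhM').1 u huf
        obtain ⟨c, hc⟩ := Finset.card_pos.mp (by rw [hcu1]; exact Nat.one_pos)
        obtain ⟨c', hc'⟩ := Finset.card_pos.mp (by rw [hcu1']; exact Nat.one_pos)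
        have hcT : c ∈ T := by
          rcases Finset.mem_insert.mp (hsub (Finset.mem_inter.mp hc).1) with h1 | h2
          · exact absurd (hvertmem huverts hvV (Finset.mem_inter.mp hc).2
              (by rw [h1]; exact hxXv)) huv
          · exact h2
        have hcT' : c' ∈ T := by
          rcases Finset.mem_insert.mp (hsub' (Finset.mem_inter.mp hc').1) with h1 | h2
          · exact absurd (hvertmem huverts hvV (Finset.mem_inter.mp hc').2
              (by rw [h1]; exact hxXv')) huv
          · exact h2
        have hTu1 : (T ∩ X u).card = 1 := hT1 u huverts hucol
        have hcc : c = c' := Finset.card_le_one.mp (le_of_eq hTu1) c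
          (Finset.mem_inter.mpr ⟨hcT, (Finset.mem_inter.mp hc).2⟩) c'
          (Finset.mem_inter.mpr ⟨hcT', (Finset.mem_inter.mp hc').2⟩)
        exact Finset.disjoint_left.mp hdisj' (Finset.mem_inter.mp hc).1
          (hcc ▸ (Finset.mem_inter.mp hc').1)
    have huniqM : ∀ r, r ∈ G.inc e → ∀ h1' h2', h1' ∈ M e → h2' ∈ M e →
        H.inc h1' ∩ X r ⊆ T → H.inc h2' ∩ X r ⊆ T → h1' = h2' := by
      intro r hre h1' h2' hm1 hm2 hs1 hs2
      by_contra hne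
      have hrv : r ∈ G.verts := G.inc_sub e he hre
      have hdisj' := (hM e he).2.2 h1' hm1 h2' hm2 hne
      have hc1 : (H.inc h1' ∩ X r).card = 1 := ((hM e he).2.1 h1' hm1).1 r hre
      have hc2 : (H.inc h2' ∩ X r).card = 1 := ((hM e he).2.1 h2' hm2).1 r hre
      obtain ⟨c1, hc1m⟩ := Finset.card_pos.mp (by rw [hc1]; exact Nat.one_pos)
      obtain ⟨c2, hc2m⟩ := Finset.card_pos.mp (by rw [hc2]; exact Nat.one_pos)
      have hcc : c1 = c2 := by
        by_cases hrcol : r ∈ (v :: L2').toFinset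
        · exfalso
          have := huncolT r hrcol
          rw [Finset.eq_empty_iff_forall_notMem] at this
          exact this c1 (Finset.mem_inter.mpr ⟨hs1 hc1m, (Finset.mem_inter.mp hc1m).2⟩)
        · have hT1r := hT1 r hrv hrcol
          exact Finset.card_le_one.mp (le_of_eq hT1r) c1
            (Finset.mem_inter.mpr ⟨hs1 hc1m, (Finset.mem_inter.mp hc1m).2⟩) c2
            (Finset.mem_inter.mpr ⟨hs2 hc2m, (Finset.mem_inter.mp hc2m).2⟩)
      exact Finset.disjoint_left.mp hdisj' (Finset.mem_inter.mp hc1m).1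
        (hcc ▸ (Finset.mem_inter.mp hc2m).1)
    have hDcard : D.card ≤ 1 := by
      rw [Finset.card_le_one]
      intro a ha b hb
      rw [hD_def, Finset.mem_filter] at ha hb
      obtain ⟨haX, h, hhM, hah, hc⟩ := ha
      obtain ⟨hbX, h', hhM', hbh, hc'⟩ := hb
      rcases hc with ⟨hvq, hsubp⟩ | ⟨hvp, hsubq⟩
      · rcases hc' with ⟨-, hsubp'⟩ | ⟨hvp, -⟩
        · have hhh : h = h' := huniqM p hpe h h' hhM hhM' hsubp hsubp'
          have hcv1 : (H.inc h ∩ X v).card = 1 :=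
            ((hM e he).2.1 h hhM).1 v (by rw [hvq]; exact hqe)
          exact Finset.card_le_one.mp (le_of_eq hcv1) a
            (Finset.mem_inter.mpr ⟨hah, haX⟩) b
            (Finset.mem_inter.mpr ⟨hhh ▸ hbh, hbX⟩)
        · exact absurd (hvp.symm.trans hvq) hpq
      · rcases hc' with ⟨hvq, -⟩ | ⟨-, hsubq'⟩
        · exact absurd (hvp.symm.trans hvq) hpq
        · have hhh : h = h' := huniqM q hqe h h' hhM hhM' hsubq hsubq'
          have hcv1 : (H.inc h ∩ X v).card = 1 :=
            ((hM e he).2.1 h hhM).1 v (by rw [hvp]; exact hpe)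
          exact Finset.card_le_one.mp (le_of_eq hcv1) a
            (Finset.mem_inter.mpr ⟨hah, haX⟩) b
            (Finset.mem_inter.mpr ⟨hhh ▸ hbh, hbX⟩)
    have hdfv : G.degree v ≤ (X v).card := hdf v hvV
    have hchoice : ∃ x ∈ X v, x ∉ bad ∧ x ∉ D := by
      have hDgen : (v ≠ q ∧ v ≠ p) → D = ∅ := by
        intro ⟨h1, h2⟩
        rw [hD_def, Finset.eq_empty_iff_forall_notMem]
        intro y hy
        rw [Finset.mem_filter] at hy
        obtain ⟨-, h, -, -, hc⟩ := hy
        rcases hc with ⟨hvq, -⟩ | ⟨hvp, -⟩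
        · exact h1 hvq
        · exact h2 hvp
      have hlt : bad.card + D.card < (X v).card := by
        by_cases hvs : v = s
        · have hDempty : D = ∅ := hDgen ⟨fun hh => hqs (hh.symm.trans hvs),
            fun hh => hps (hh.symm.trans hvs)⟩
          have hemem : e ∈ degset := by
            rw [hdeg_def, Finset.mem_filter]; exact ⟨he, by rw [hvs]; exact hse⟩
          have hb := hbadcount (degset.erase e) (by
            intro x hx
            obtain ⟨f, hfT, hfne, hrest⟩ := hexf x hx
            exact ⟨f, Finset.mem_erase.mpr ⟨hfne hvs, hFsub hfT⟩, hfT, hrest⟩)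
          have hce := Finset.card_erase_of_mem hemem
          have hdpos : 0 < degset.card := Finset.card_pos.mpr ⟨e, hemem⟩
          rw [hDempty]
          simp only [Finset.card_empty]
          rw [hdegcard] at hce hdpos
          omega
        · have hsun : s ∈ L2'.toFinset := hsmem l1 v L2' hL hvs
          have hsconsmem : s ∈ (v :: L2').toFinset := by
            simp only [List.toFinset_cons, Finset.mem_insert]
            exact Or.inr hsun
          have henotF : v ∈ G.inc e → e ∉ Ftar := by
            intro hv hmem
            rw [hFtar_def, Finset.mem_filter] at hmem
            exact hmem.2.2 s (Finset.mem_erase.mpr ⟨fun hh => hvs hh.symm, hse⟩) hsconsmem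
          -- a generic step for the cases with a later neighbor and v in inc e
          have hcase2 : ∀ w ∈ L2'.toFinset, (G.eraseEdge e).Adj v w → v ∈ G.inc e →
              bad.card + D.card < (X v).card := by
            intro w hw hadj hvince
            obtain ⟨hvw, f0, hf0, hvf0, hwf0⟩ := hadj
            have hf0e : f0 ≠ e := (Finset.mem_erase.mp hf0).1
            have hf0deg : f0 ∈ degset := by
              rw [hdeg_def, Finset.mem_filter]
              exact ⟨(Finset.mem_erase.mp hf0).2, hvf0⟩
            have hf0notF : f0 ∉ Ftar := by
              intro hmem
              rw [hFtar_def, Finset.mem_filter] at hmem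
              exact hmem.2.2 w (Finset.mem_erase.mpr ⟨fun hh => hvw hh.symm, hwf0⟩)
                (by simp only [List.toFinset_cons, Finset.mem_insert]
                    exact Or.inr hw)
            have hedeg : e ∈ degset := by
              rw [hdeg_def, Finset.mem_filter]; exact ⟨he, hvince⟩
            have henF := henotF hvince
            have hb := hbadcount ((degset.erase e).erase f0) (by
              intro x hx
              obtain ⟨f, hfT, -, hrest⟩ := hexf x hx
              refine ⟨f, ?_, hfT, hrest⟩
              refine Finset.mem_erase.mpr ⟨fun hh => hf0notF (hh ▸ hfT), ?_⟩
              exact Finset.mem_erase.mpr ⟨fun hh => henF (hh ▸ hfT), hFsub hfT⟩)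
            have hm1 : f0 ∈ degset.erase e := Finset.mem_erase.mpr ⟨hf0e, hf0deg⟩
            have hce1 := Finset.card_erase_of_mem hedeg
            have hce2 := Finset.card_erase_of_mem hm1
            have hdpos : 0 < (degset.erase e).card := Finset.card_pos.mpr ⟨f0, hm1⟩
            rw [hdegcard] at hce1
            omega
          by_cases hvq : v = q
          · obtain ⟨w, hw, hadj⟩ := hstrv.1 (Or.inr hvq)
            exact hcase2 w hw hadj (by rw [hvq]; exact hqe)
          · by_cases hvp : v = p
            · by_cases hqcol : q ∈ L2'.toFinset
              · have hDempty : D = ∅ := by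
                  rw [hD_def, Finset.eq_empty_iff_forall_notMem]
                  intro y hy
                  rw [Finset.mem_filter] at hy
                  obtain ⟨-, h, hhM, -, hc⟩ := hy
                  rcases hc with ⟨hq', -⟩ | ⟨-, hsubq⟩
                  · exact hvq hq'
                  · have hcq1 : (H.inc h ∩ X q).card = 1 := ((hM e he).2.1 h hhM).1 q hqe
                    obtain ⟨c, hcmem⟩ := Finset.card_pos.mp (by rw [hcq1]; exact Nat.one_pos)
                    have hemp := huncolT q (by
                      simp only [List.toFinset_cons, Finset.mem_insert]
                      exact Or.inr hqcol)
                    rw [Finset.eq_empty_iff_forall_notMem] at hemp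
                    exact hemp c (Finset.mem_inter.mpr
                      ⟨hsubq hcmem, (Finset.mem_inter.mp hcmem).2⟩)
                have hvince : v ∈ G.inc e := by rw [hvp]; exact hpe
                have hedeg : e ∈ degset := by
                  rw [hdeg_def, Finset.mem_filter]; exact ⟨he, hvince⟩
                have henF := henotF hvince
                have hb := hbadcount (degset.erase e) (by
                  intro x hx
                  obtain ⟨f, hfT, -, hrest⟩ := hexf x hx
                  exact ⟨f, Finset.mem_erase.mpr ⟨fun hh => henF (hh ▸ hfT),
                    hFsub hfT⟩, hfT, hrest⟩)
                have hce := Finset.card_erase_of_mem hedeg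
                have hdpos : 0 < degset.card := Finset.card_pos.mpr ⟨e, hedeg⟩
                rw [hDempty]
                simp only [Finset.card_empty]
                rw [hdegcard] at hce hdpos
                omega
              · obtain ⟨w, hw, hadj⟩ := (hstrv.2.1 hvp).resolve_left hqcol
                exact hcase2 w hw hadj (by rw [hvp]; exact hpe)
            · have hDempty : D = ∅ := hDgen ⟨hvq, hvp⟩
              rw [hDempty]
              simp only [Finset.card_empty]
              by_cases hvince : v ∈ G.inc e
              · have hedeg : e ∈ degset := by
                  rw [hdeg_def, Finset.mem_filter]; exact ⟨he, hvince⟩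
                have henF := henotF hvince
                have hb := hbadcount (degset.erase e) (by
                  intro x hx
                  obtain ⟨f, hfT, -, hrest⟩ := hexf x hx
                  exact ⟨f, Finset.mem_erase.mpr ⟨fun hh => henF (hh ▸ hfT),
                    hFsub hfT⟩, hfT, hrest⟩)
                have hce := Finset.card_erase_of_mem hedeg
                have hdpos : 0 < degset.card := Finset.card_pos.mpr ⟨e, hedeg⟩
                rw [hdegcard] at hce hdpos
                omega
              · obtain ⟨w, hw, hadj⟩ := hstrv.1 (Or.inl hvince)
                obtain ⟨hvw, f0, hf0, hvf0, hwf0⟩ := hadj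
                have hf0deg : f0 ∈ degset := by
                  rw [hdeg_def, Finset.mem_filter]
                  exact ⟨(Finset.mem_erase.mp hf0).2, hvf0⟩
                have hf0notF : f0 ∉ Ftar := by
                  intro hmem
                  rw [hFtar_def, Finset.mem_filter] at hmem
                  exact hmem.2.2 w (Finset.mem_erase.mpr ⟨fun hh => hvw hh.symm, hwf0⟩)
                    (by simp only [List.toFinset_cons, Finset.mem_insert]
                        exact Or.inr hw)
                have hb := hbadcount (degset.erase f0) (by
                  intro x hx
                  obtain ⟨f, hfT, -, hrest⟩ := hexf x hx
                  exact ⟨f, Finset.mem_erase.mpr ⟨fun hh => hf0notF (hh ▸ hfT),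
                    hFsub hfT⟩, hfT, hrest⟩)
                have hce := Finset.card_erase_of_mem hf0deg
                have hdpos : 0 < degset.card := Finset.card_pos.mpr ⟨f0, hf0deg⟩
                rw [hdegcard] at hce hdpos
                omega
      have hsubXv : bad ∪ D ⊆ X v := by
        intro y hy
        rcases Finset.mem_union.mp hy with h1 | h2
        · rw [hbad_def] at h1; exact Finset.mem_of_mem_filter y h1
        · rw [hD_def] at h2; exact Finset.mem_of_mem_filter y h2
      have hnotsub : ¬ X v ⊆ bad ∪ D := by
        intro hcon
        have h1 := Finset.card_le_card hcon
        have h2 := Finset.card_union_le bad D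
        omega
      obtain ⟨x, hx1, hx2⟩ := Finset.not_subset.mp hnotsub
      exact ⟨x, hx1, fun hh => hx2 (Finset.mem_union_left _ hh),
        fun hh => hx2 (Finset.mem_union_right _ hh)⟩
    obtain ⟨x, hxX, hxbad, hxD⟩ := hchoice
    refine ih (insert x T) hsuffix' ?_ ?_ ?_ ?_
    · -- transversal property
      intro u hu hun
      by_cases huv : u = v
      · subst huv
        rw [Finset.insert_inter_of_mem hxX, huncolT u (by simp)]
        simp
      · have hxXu : x ∉ X u := by
          intro hmem
          exact huv ((hvertmem hvV hu hxX hmem).symm)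
        rw [Finset.insert_inter_of_notMem hxXu]
        exact hT1 u hu (by
          intro hmem
          apply hun
          simp only [List.toFinset_cons, Finset.mem_insert, List.mem_toFinset] at hmem
          rcases hmem with h1 | h2
          · exact absurd h1 huv
          · exact List.mem_toFinset.mpr h2)
    · -- colors located at colored vertices
      intro c hc
      rcases Finset.mem_insert.mp hc with h1 | h2
      · exact ⟨v, hvV, by simp [hvL2'], h1 ▸ hxX⟩
      · obtain ⟨u, hu1, hu2, hu3⟩ := hT2 c h2
        refine ⟨u, hu1, ?_, hu3⟩
        intro hmem
        exact hu2 (by simp only [List.toFinset_cons, Finset.mem_insert]; right; exact hmem)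
    · -- independence
      intro h hh hsub
      by_cases hxh : x ∈ H.inc h
      · apply hxbad
        rw [hbad_def, Finset.mem_filter]
        exact ⟨hxX, h, hh, hsub⟩
      · apply hindep h hh
        intro c hc
        rcases Finset.mem_insert.mp (hsub hc) with h1 | h2
        · exact absurd (h1 ▸ hc) hxh
        · exact h2
    · -- the p/q dodge invariant
      intro h hh hcon
      obtain ⟨hP, hQ⟩ := hcon
      have hcp1 : (H.inc h ∩ X p).card = 1 := ((hM e he).2.1 h hh).1 p hpe
      have hcq1 : (H.inc h ∩ X q).card = 1 := ((hM e he).2.1 h hh).1 q hqe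
      obtain ⟨cp, hcp⟩ := Finset.card_pos.mp (by omega : 0 < (H.inc h ∩ X p).card)
      obtain ⟨cq, hcq⟩ := Finset.card_pos.mp (by omega : 0 < (H.inc h ∩ X q).card)
      have hcpX : cp ∈ X p := (Finset.mem_inter.mp hcp).2
      have hcqX : cq ∈ X q := (Finset.mem_inter.mp hcq).2
      rcases Finset.mem_insert.mp (hP hcp) with hcpx | hcpT
      · -- cp = x, so v = p
        have hvp : v = p := hvertmem hvV hpv (hcpx ▸ hxX) hcpX
        rcases Finset.mem_insert.mp (hQ hcq) with hcqx | hcqT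
        · have hvq : v = q := hvertmem hvV hqv (hcqx ▸ hxX) hcqX
          exact hpq (hvp.symm.trans hvq)
        · apply hxD
          rw [hD_def, Finset.mem_filter]
          exact ⟨hxX, h, hh, hcpx ▸ (Finset.mem_inter.mp hcp).1,
            Or.inr ⟨hvp, subset_of_card_one_mem hcq1 hcq hcqT⟩⟩
      · rcases Finset.mem_insert.mp (hQ hcq) with hcqx | hcqT
        · -- cq = x, so v = q
          have hvq : v = q := hvertmem hvV hqv (hcqx ▸ hxX) hcqX
          apply hxD
          rw [hD_def, Finset.mem_filter]
          exact ⟨hxX, h, hh, hcqx ▸ (Finset.mem_inter.mp hcq).1,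
            Or.inl ⟨hvq, subset_of_card_one_mem hcp1 hcp hcpT⟩⟩
        · exact hdodge h hh ⟨subset_of_card_one_mem hcp1 hcp hcpT,
            subset_of_card_one_mem hcq1 hcq hcqT⟩

end Greedy
section EnumOrder

lemma exists_crossing {R : α → α → Prop} {A S : Finset α} {x y : α}
    (hpath : Relation.ReflTransGen R x y) (hdis : Disjoint A S)
    (hclosed : ∀ a ∈ A, ∀ b, R a b → b ∈ A ∨ b ∈ S) (hy : y ∈ S) :
    x ∈ A → ∃ a ∈ A, ∃ b ∈ S, R a b := by
  induction hpath using Relation.ReflTransGen.head_induction_on with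
  | refl => intro hx; exact absurd hy (Finset.disjoint_left.mp hdis hx)
  | head hstep htail ih =>
    intro hx
    rcases hclosed _ hx _ hstep with hcA | hcS
    · exact ih hcA
    · exact ⟨_, hx, _, hcS, hstep⟩

lemma enum_order {R : α → α → Prop} (Sink : Finset α) :
    ∀ (n : ℕ) (A : Finset α) (Ls : List α), A.card ≤ n → Ls.Nodup →
    Disjoint A Ls.toFinset →
    (∀ x ∈ A, ∀ y, R x y → y ∈ A ∨ y ∈ Ls.toFinset) →
    (∀ x ∈ A, ∃ t, Relation.ReflTransGen R x t ∧
      (t ∈ Ls.toFinset ∨ (t ∈ A ∧ t ∈ Sink))) →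
    ∃ J : List α, J.Nodup ∧ J.toFinset = A ∧
      ∀ l1 v l2, J ++ Ls = l1 ++ v :: l2 → v ∈ A →
        (∃ w ∈ l2.toFinset, R v w) ∨ v ∈ Sink := by
  intro n
  induction n with
  | zero =>
    intro A Ls hcard _ _ _ _
    have : A = ∅ := Finset.card_eq_zero.mp (Nat.le_zero.mp hcard)
    subst this
    exact ⟨[], List.nodup_nil, by simp, fun l1 v l2 _ hv => absurd hv (by simp)⟩
  | succ n ihn =>
    intro A Ls hcard hLsnd hdis hclosed hconn
    rcases Finset.eq_empty_or_nonempty A with rfl | ⟨x, hx⟩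
    · exact ⟨[], List.nodup_nil, by simp, fun l1 v l2 _ hv => absurd hv (by simp)⟩
    have hstep : ∃ x0 ∈ A, (∃ w ∈ Ls.toFinset, R x0 w) ∨ x0 ∈ Sink := by
      by_cases hex : ∃ x0 ∈ A, ∃ w ∈ Ls.toFinset, R x0 w
      · obtain ⟨x0, h1, h2⟩ := hex; exact ⟨x0, h1, Or.inl h2⟩
      · obtain ⟨t, hpath, ht⟩ := hconn x hx
        rcases ht with ht1 | ht2
        · exfalso
          obtain ⟨a, ha, b, hb, hab⟩ := exists_crossing hpath hdis hclosed ht1 hx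
          exact hex ⟨a, ha, b, hb, hab⟩
        · exact ⟨t, ht2.1, Or.inr ht2.2⟩
    obtain ⟨x0, hx0A, hx0cond⟩ := hstep
    have hApos : 0 < A.card := Finset.card_pos.mpr ⟨x0, hx0A⟩
    have hcard' : (A.erase x0).card ≤ n := by
      rw [Finset.card_erase_of_mem hx0A]; omega
    have hx0Ls : x0 ∉ Ls.toFinset := Finset.disjoint_left.mp hdis hx0A
    have hLsnd' : (x0 :: Ls).Nodup :=
      List.nodup_cons.mpr ⟨fun hh => hx0Ls (List.mem_toFinset.mpr hh), hLsnd⟩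
    have hdis' : Disjoint (A.erase x0) (x0 :: Ls).toFinset := by
      rw [Finset.disjoint_left]
      intro a ha hmem
      simp only [List.toFinset_cons, Finset.mem_insert] at hmem
      rcases hmem with rfl | hmem
      · exact (Finset.mem_erase.mp ha).1 rfl
      · exact Finset.disjoint_left.mp hdis (Finset.mem_of_mem_erase ha) hmem
    have hclosed' : ∀ a ∈ A.erase x0, ∀ b, R a b →
        b ∈ A.erase x0 ∨ b ∈ (x0 :: Ls).toFinset := by
      intro a ha b hab
      rcases hclosed a (Finset.mem_of_mem_erase ha) b hab with h1 | h2
      · by_cases hbx : b = x0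
        · right; simp [hbx]
        · left; exact Finset.mem_erase.mpr ⟨hbx, h1⟩
      · right
        simp only [List.toFinset_cons, Finset.mem_insert]
        exact Or.inr h2
    have hconn' : ∀ a ∈ A.erase x0, ∃ t, Relation.ReflTransGen R a t ∧
        (t ∈ (x0 :: Ls).toFinset ∨ (t ∈ A.erase x0 ∧ t ∈ Sink)) := by
      intro a ha
      obtain ⟨t, hpath, ht⟩ := hconn a (Finset.mem_of_mem_erase ha)
      rcases ht with h1 | h2
      · exact ⟨t, hpath, Or.inl (by
          simp only [List.toFinset_cons, Finset.mem_insert]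
          exact Or.inr h1)⟩
      · by_cases htx : t = x0
        · exact ⟨t, hpath, Or.inl (by simp [htx])⟩
        · exact ⟨t, hpath, Or.inr ⟨Finset.mem_erase.mpr ⟨htx, h2.1⟩, h2.2⟩⟩
    obtain ⟨J', hJnd, hJset, hJcond⟩ :=
      ihn (A.erase x0) (x0 :: Ls) hcard' hLsnd' hdis' hclosed' hconn'
    refine ⟨J' ++ [x0], ?_, ?_, ?_⟩
    · rw [List.nodup_append]
      refine ⟨hJnd, List.nodup_singleton x0, ?_⟩
      intro a haJ b hb hax0
      simp only [List.mem_singleton] at hb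
      rw [hb] at hax0
      have : a ∈ A.erase x0 := hJset ▸ List.mem_toFinset.mpr haJ
      exact (Finset.mem_erase.mp this).1 hax0
    · rw [List.toFinset_append, hJset]
      ext a
      simp only [Finset.mem_union, Finset.mem_erase, List.toFinset_cons,
        List.toFinset_nil, Finset.mem_insert, Finset.notMem_empty, or_false]
      constructor
      · rintro (⟨h1, h2⟩ | rfl)
        · exact h2
        · exact hx0A
      · intro ha
        by_cases hax : a = x0
        · exact Or.inr hax
        · exact Or.inl ⟨hax, ha⟩
    · intro l1 v l2 hsplit hvA
      by_cases hvx : v = x0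
      · subst hvx
        have hnodup : (J' ++ v :: Ls).Nodup := by
          rw [List.nodup_append]
          refine ⟨hJnd, hLsnd', ?_⟩
          intro a haJ b haLs hab
          subst hab
          have haA : a ∈ A.erase v := hJset ▸ List.mem_toFinset.mpr haJ
          rcases List.mem_cons.mp haLs with rfl | hmem
          · exact (Finset.mem_erase.mp haA).1 rfl
          · exact Finset.disjoint_left.mp hdis (Finset.mem_of_mem_erase haA)
              (List.mem_toFinset.mpr hmem)
        have heql : J' ++ v :: Ls = l1 ++ v :: l2 := by
          rw [← hsplit]; simp
        have hl2 : Ls = l2 := nodup_split_unique heql hnodup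
        rcases hx0cond with ⟨w, hw, hr⟩ | hsink
        · exact Or.inl ⟨w, hl2 ▸ hw, hr⟩
        · exact Or.inr hsink
      · have hvA' : v ∈ A.erase x0 := Finset.mem_erase.mpr ⟨hvx, hvA⟩
        apply hJcond l1 v l2 _ hvA'
        rw [← hsplit]; simp

end EnumOrder
section Build

set_option maxHeartbeats 1000000 in
lemma build_IT (G : FinHypergraph α) (X : α → Finset β) (H : FinHypergraph β)
    (hG : G.Connected)
    (hdisj : ∀ u ∈ G.verts, ∀ v ∈ G.verts, u ≠ v → Disjoint (X u) (X v))
    (M : ℕ → Finset ℕ)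
    (hM : ∀ e ∈ G.edges,
      M e ⊆ H.edges ∧
      (∀ e' ∈ M e, (∀ v ∈ G.inc e, (H.inc e' ∩ X v).card = 1) ∧
        H.inc e' ⊆ (G.inc e).biUnion X) ∧
      ∀ e₁ ∈ M e, ∀ e₂ ∈ M e, e₁ ≠ e₂ → Disjoint (H.inc e₁) (H.inc e₂))
    (hMall : H.edges = G.edges.biUnion M)
    (hdf : ∀ v ∈ G.verts, G.degree v ≤ (X v).card)
    (e : ℕ) (he : e ∈ G.edges)
    (p q s : α) (hpe : p ∈ G.inc e) (hqe : q ∈ G.inc e) (hse : s ∈ G.inc e)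
    (hpq : p ≠ q) (hps : p ≠ s) (hqs : q ≠ s)
    (hqconn : Relation.ReflTransGen (G.eraseEdge e).Adj q s) :
    HasIT H G.verts X := by
  have hsv : s ∈ G.verts := G.inc_sub e he hse
  have hqv : q ∈ G.verts := G.inc_sub e he hqe
  have hR'verts : ∀ {x y : α}, (G.eraseEdge e).Adj x y → y ∈ G.verts := by
    intro x y ⟨hne, f, hf, hx, hy⟩
    exact G.inc_sub f (Finset.mem_of_mem_erase hf) hy
  set C : Finset α :=
    G.verts.filter (fun x => Relation.ReflTransGen (G.eraseEdge e).Adj x s) with hC_def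
  have hsC : s ∈ C := by
    rw [hC_def, Finset.mem_filter]; exact ⟨hsv, Relation.ReflTransGen.refl⟩
  have hqC : q ∈ C := by
    rw [hC_def, Finset.mem_filter]; exact ⟨hqv, hqconn⟩
  have hCclosed : ∀ x ∈ C, ∀ y, (G.eraseEdge e).Adj x y → y ∈ C := by
    intro x hxC y hxy
    rw [hC_def, Finset.mem_filter] at hxC ⊢
    exact ⟨hR'verts hxy, Relation.ReflTransGen.head (adj_symm _ hxy) hxC.2⟩
  -- phase 1 : order C.erase s
  obtain ⟨J1, hJ1nd, hJ1set, hJ1cond⟩ :=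
    enum_order (R := (G.eraseEdge e).Adj) (∅ : Finset α) (C.erase s).card
      (C.erase s) [s] le_rfl (List.nodup_singleton s)
      (by
        rw [Finset.disjoint_left]
        intro a ha hmem
        simp only [List.toFinset_cons, List.toFinset_nil, Finset.mem_insert,
          Finset.notMem_empty, or_false] at hmem
        exact (Finset.mem_erase.mp ha).1 hmem)
      (by
        intro x hx y hxy
        have hyC := hCclosed x (Finset.mem_of_mem_erase hx) y hxy
        by_cases hys : y = s
        · right; simp [hys]
        · left; exact Finset.mem_erase.mpr ⟨hys, hyC⟩)
      (by
        intro x hx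
        refine ⟨s, ?_, Or.inl (by simp)⟩
        have := Finset.mem_of_mem_erase hx
        rw [hC_def, Finset.mem_filter] at this
        exact this.2)
  have hJ1Cset : ∀ a ∈ J1, a ∈ C.erase s := by
    intro a ha; rw [← hJ1set]; exact List.mem_toFinset.mpr ha
  have hLs2nd : (J1 ++ [s]).Nodup := by
    rw [List.nodup_append]
    refine ⟨hJ1nd, List.nodup_singleton s, ?_⟩
    intro a ha b hb hs'
    simp only [List.mem_singleton] at hb
    rw [hb] at hs'
    exact (Finset.mem_erase.mp (hJ1Cset a ha)).1 hs'
  have hLs2set : (J1 ++ [s]).toFinset = C := by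
    rw [List.toFinset_append, hJ1set]
    ext a
    simp only [Finset.mem_union, Finset.mem_erase, List.toFinset_cons,
      List.toFinset_nil, Finset.mem_insert, Finset.notMem_empty, or_false]
    constructor
    · rintro (⟨h1, h2⟩ | rfl)
      · exact h2
      · exact hsC
    · intro ha
      by_cases hax : a = s
      · exact Or.inr hax
      · exact Or.inl ⟨hax, ha⟩
  -- phase 2 : order verts \ C
  obtain ⟨J2, hJ2nd, hJ2set, hJ2cond⟩ :=
    enum_order (R := (G.eraseEdge e).Adj) (G.inc e) (G.verts \ C).card
      (G.verts \ C) (J1 ++ [s]) le_rfl hLs2nd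
      (by
        rw [Finset.disjoint_left]
        intro a ha hmem
        rw [hLs2set] at hmem
        exact (Finset.mem_sdiff.mp ha).2 hmem)
      (by
        intro x hx y hxy
        by_cases hyC : y ∈ C
        · right; rw [hLs2set]; exact hyC
        · left; exact Finset.mem_sdiff.mpr ⟨hR'verts hxy, hyC⟩)
      (by
        intro x hx
        obtain ⟨t, hte, hpath⟩ := reach_inc G hG e he ⟨s, hse⟩ x (Finset.mem_sdiff.mp hx).1
        have htC : t ∉ C := by
          intro htC
          apply (Finset.mem_sdiff.mp hx).2
          rw [hC_def, Finset.mem_filter] at htC ⊢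
          exact ⟨(Finset.mem_sdiff.mp hx).1, hpath.trans htC.2⟩
        exact ⟨t, hpath, Or.inr ⟨Finset.mem_sdiff.mpr
          ⟨G.inc_sub e he hte, htC⟩, hte⟩⟩)
  have hJ2A2 : ∀ a ∈ J2, a ∈ G.verts \ C := by
    intro a ha; rw [← hJ2set]; exact List.mem_toFinset.mpr ha
  have hLnd : (J2 ++ (J1 ++ [s])).Nodup := by
    rw [List.nodup_append]
    refine ⟨hJ2nd, hLs2nd, ?_⟩
    intro a ha b hmem hab
    subst hab
    have h1 := hJ2A2 a ha
    have h2 : a ∈ C := by rw [← hLs2set]; exact List.mem_toFinset.mpr hmem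
    exact (Finset.mem_sdiff.mp h1).2 h2
  have hLset : (J2 ++ (J1 ++ [s])).toFinset = G.verts := by
    rw [List.toFinset_append, hJ2set, hLs2set]
    rw [Finset.sdiff_union_of_subset (by rw [hC_def]; exact Finset.filter_subset _ _)]
  apply greedy_IT G X H hdisj M hM hMall hdf e he p q s hpe hqe hse hpq hps hqs
    (J2 ++ (J1 ++ [s])) hLnd hLset
  intro l1 v l2 hsplit
  have hvL : v ∈ J2 ++ (J1 ++ [s]) := by rw [hsplit]; simp
  -- locate v
  have hloc : v ∈ J2 ∨ v ∈ J1 ∨ v = s := by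
    rcases List.mem_append.mp hvL with h1 | h2
    · exact Or.inl h1
    · rcases List.mem_append.mp h2 with h3 | h4
      · exact Or.inr (Or.inl h3)
      · simp only [List.mem_singleton] at h4
        exact Or.inr (Or.inr h4)
  rcases hloc with hvJ2 | hvJ1 | hvs
  · -- v in the first part
    obtain ⟨m1, m2, hm⟩ := List.append_of_mem hvJ2
    have hsplit2 : J2 ++ (J1 ++ [s]) = m1 ++ v :: (m2 ++ (J1 ++ [s])) := by
      rw [hm]; simp
    have hl2 : m2 ++ (J1 ++ [s]) = l2 :=
      nodup_split_unique (by rw [← hsplit2, hsplit]) (hsplit2 ▸ hLnd)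
    have hvA2 := hJ2A2 v hvJ2
    have hcond := hJ2cond m1 v (m2 ++ (J1 ++ [s])) (by rw [hm]; simp)
      (by rw [← hJ2set]; exact List.mem_toFinset.mpr hvJ2)
    have hqin : q ∈ l2.toFinset := by
      rw [← hl2, List.toFinset_append]
      exact Finset.mem_union_right _ (by rw [hLs2set]; exact hqC)
    refine ⟨?_, ?_, ?_⟩
    · intro hcase
      rcases hcond with hnb | hsink
      · obtain ⟨w, hw, hr⟩ := hnb
        exact ⟨w, hl2 ▸ hw, hr⟩
      · rcases hcase with h1 | h2
        · exact absurd hsink h1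
        · exfalso
          exact (Finset.mem_sdiff.mp hvA2).2 (h2 ▸ hqC)
    · intro _
      exact Or.inl hqin
    · intro hvs'
      exfalso
      exact (Finset.mem_sdiff.mp hvA2).2 (hvs' ▸ hsC)
  · -- v in the middle part
    obtain ⟨m1, m2, hm⟩ := List.append_of_mem hvJ1
    have hsplit2 : J2 ++ (J1 ++ [s]) = (J2 ++ m1) ++ v :: (m2 ++ [s]) := by
      rw [hm]; simp
    have hl2 : m2 ++ [s] = l2 :=
      nodup_split_unique (by rw [← hsplit2, hsplit]) (hsplit2 ▸ hLnd)
    have hvC := hJ1Cset v hvJ1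
    have hcond := hJ1cond m1 v (m2 ++ [s]) (by rw [hm]; simp)
      (by rw [← hJ1set]; exact List.mem_toFinset.mpr hvJ1)
    have hnb : ∃ w ∈ l2.toFinset, (G.eraseEdge e).Adj v w := by
      rcases hcond with hnb | hsink
      · obtain ⟨w, hw, hr⟩ := hnb
        exact ⟨w, hl2 ▸ hw, hr⟩
      · exact absurd hsink (Finset.notMem_empty v)
    exact ⟨fun _ => hnb, fun _ => Or.inr hnb,
      fun hvs' => absurd hvs' (Finset.mem_erase.mp hvC).1⟩
  · -- v = s
    rw [hvs] at hsplit
    have heq : J2 ++ (J1 ++ [s]) = (J2 ++ J1) ++ s :: [] := by simp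
    have hnodup2 : ((J2 ++ J1) ++ s :: []).Nodup := heq ▸ hLnd
    have hl2 : ([] : List α) = l2 :=
      nodup_split_unique (heq.symm.trans hsplit) hnodup2
    refine ⟨?_, ?_, fun _ => hl2.symm⟩
    · intro hcase
      rcases hcase with h1 | h2
      · exact absurd (hvs.symm ▸ hse) h1
      · exact absurd (h2.symm.trans hvs) hqs
    · intro hp'
      exact absurd (hp'.symm.trans hvs) hps

lemma hyperedge_not_connected (G : FinHypergraph α) (X : α → Finset β) (H : FinHypergraph β)
    (hG : G.Connected) (hC : IsCover G X H)
    (hdf : ∀ v ∈ G.verts, G.degree v ≤ (X v).card)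
    (hunc : ¬ HasIT H G.verts X)
    (e : ℕ) (he : e ∈ G.edges) (hcard : 3 ≤ (G.inc e).card) :
    ∀ u ∈ G.inc e, ∀ w ∈ G.inc e, u ≠ w →
      ¬ Relation.ReflTransGen (G.eraseEdge e).Adj u w := by
  intro u0 hu0 w0 hw0 huw hconn
  apply hunc
  obtain ⟨hdisj, hHverts, hindepX, M, hM, hMall⟩ := hC
  have hz : ∃ z, z ∈ G.inc e ∧ z ≠ u0 ∧ z ≠ w0 := by
    have hw0' : w0 ∈ (G.inc e).erase u0 := Finset.mem_erase.mpr ⟨huw.symm, hw0⟩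
    have c1 := Finset.card_erase_of_mem hu0
    have c2 := Finset.card_erase_of_mem hw0'
    have hne : (((G.inc e).erase u0).erase w0).Nonempty := by
      apply Finset.card_pos.mp; omega
    obtain ⟨z, hz⟩ := hne
    obtain ⟨hzw, hz1⟩ := Finset.mem_erase.mp hz
    obtain ⟨hzu, hz2⟩ := Finset.mem_erase.mp hz1
    exact ⟨z, hz2, hzu, hzw⟩
  obtain ⟨z, hze, hzu, hzw⟩ := hz
  have hRsymm : Symmetric (Relation.ReflTransGen (G.eraseEdge e).Adj) :=
    fun a b h => by
      induction h with
      | refl => exact Relation.ReflTransGen.refl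
      | tail _ hbc ih => exact Relation.ReflTransGen.head (adj_symm _ hbc) ih
  by_cases hcase : Relation.ReflTransGen (G.eraseEdge e).Adj u0 z
  · -- z in same component : p = w0, q = u0, s = z
    exact build_IT G X H hG hdisj M hM hMall hdf e he w0 u0 z hw0 hu0 hze
      huw.symm (fun hh => hzw hh.symm) (fun hh => hzu hh.symm) hcase
  · -- z elsewhere : p = z, q = u0, s = w0
    exact build_IT G X H hG hdisj M hM hMall hdf e he z u0 w0 hze hu0 hw0
      hzu hzw huw hconn

end Build
section Final

lemma ncomp_connected (G : FinHypergraph α) (hG : G.Connected) (hne : G.verts.Nonempty) :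
    G.numComponents = 1 := by
  unfold FinHypergraph.numComponents
  have hflt : ∀ v ∈ G.verts,
      G.verts.filter (fun u => Relation.ReflTransGen G.Adj v u) = G.verts := by
    intro v hv
    ext u
    simp only [Finset.mem_filter, and_iff_left_iff_imp]
    intro hu
    exact hG v hv u hu
  have himg : G.verts.image
      (fun v => G.verts.filter (fun u => Relation.ReflTransGen G.Adj v u)) = {G.verts} := by
    ext S
    simp only [Finset.mem_image, Finset.mem_singleton]
    constructor
    · rintro ⟨v, hv, rfl⟩
      exact hflt v hv
    · rintro rfl
      obtain ⟨v, hv⟩ := hne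
      exact ⟨v, hv, hflt v hv⟩
  rw [himg, Finset.card_singleton]

lemma ncomp_eraseEdge (G : FinHypergraph α) (hG : G.Connected) (e : ℕ) (he : e ∈ G.edges)
    (hne : (G.inc e).Nonempty)
    (hsep : ∀ u ∈ G.inc e, ∀ w ∈ G.inc e, u ≠ w →
      ¬ Relation.ReflTransGen (G.eraseEdge e).Adj u w) :
    (G.eraseEdge e).numComponents = (G.inc e).card := by
  have hRsymm : Symmetric (Relation.ReflTransGen (G.eraseEdge e).Adj) :=
    fun a b h => by
      induction h with
      | refl => exact Relation.ReflTransGen.refl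
      | tail _ hbc ih => exact Relation.ReflTransGen.head (adj_symm _ hbc) ih
  unfold FinHypergraph.numComponents
  have hverts : (G.eraseEdge e).verts = G.verts := rfl
  rw [hverts]
  set f : α → Finset α :=
    fun v => G.verts.filter (fun u => Relation.ReflTransGen (G.eraseEdge e).Adj v u)
    with hf_def
  have hcong : ∀ v w, Relation.ReflTransGen (G.eraseEdge e).Adj v w → f v = f w := by
    intro v w hvw
    rw [hf_def]
    ext u
    simp only [Finset.mem_filter, and_congr_right_iff]
    intro _
    exact ⟨fun hh => (hRsymm hvw).trans hh, fun hh => hvw.trans hh⟩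
  have himg : G.verts.image f = (G.inc e).image f := by
    ext S
    simp only [Finset.mem_image]
    constructor
    · rintro ⟨v, hv, rfl⟩
      obtain ⟨y, hy, hpath⟩ := reach_inc G hG e he hne v hv
      exact ⟨y, hy, (hcong v y hpath).symm⟩
    · rintro ⟨y, hy, rfl⟩
      exact ⟨y, G.inc_sub e he hy, rfl⟩
  rw [himg]
  apply Finset.card_image_of_injOn
  intro y hy y' hy' heq
  by_contra hne'
  apply hsep y' hy' y hy (fun hh => hne' hh.symm)
  have hyf : y ∈ f y := by
    rw [hf_def]
    simp only [Finset.mem_filter]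
    exact ⟨G.inc_sub e he hy, Relation.ReflTransGen.refl⟩
  rw [heq] at hyf
  rw [hf_def] at hyf
  simp only [Finset.mem_filter] at hyf
  exact hyf.2

end Final

/-- in an uncolorable degree-feasible configuration, every hyperedge
of G is a bridge, ⟨e⟩ is a block, and G has no parallel hyperedges. -/
theorem uncolorable_hyperedge_bridge (G : FinHypergraph α) (X : α → Finset β) (H : FinHypergraph β)
    (hG : G.Connected) (hC : IsCover G X H)
    (hdf : ∀ v ∈ G.verts, G.degree v ≤ (X v).card)
    (hunc : ¬ HasIT H G.verts X) :
    ∀ e ∈ G.edges, 3 ≤ (G.inc e).card →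
      G.IsBridge e ∧ G.IsBlock (G.inc e) ∧ (G.induce (G.inc e)).edges = {e} ∧
      ∀ e' ∈ G.edges, e' ≠ e → G.inc e' ≠ G.inc e := by
  intro e he hcard
  have hne3 : (G.inc e).Nonempty := Finset.card_pos.mp (by omega)
  have hsep := hyperedge_not_connected G X H hG hC hdf hunc e he hcard
  have hvertsne : G.verts.Nonempty := by
    obtain ⟨v0, hv0⟩ := hne3
    exact ⟨v0, G.inc_sub e he hv0⟩
  have hincsub := G.inc_sub e he
  -- the induced subhypergraph has exactly the edge e
  have hedges : (G.induce (G.inc e)).edges = {e} := by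
    ext f
    simp only [FinHypergraph.induce, Finset.mem_filter, Finset.mem_singleton]
    constructor
    · rintro ⟨hf, hsub⟩
      by_contra hfe
      have h2 := G.inc_card f hf
      obtain ⟨a, ha⟩ := Finset.card_pos.mp (by omega : 0 < (G.inc f).card)
      obtain ⟨b, hb⟩ := Finset.card_pos.mp
        (show 0 < ((G.inc f).erase a).card by rw [Finset.card_erase_of_mem ha]; omega)
      obtain ⟨hba, hbf⟩ := Finset.mem_erase.mp hb
      apply hsep a (hsub ha) b (hsub hbf) (Ne.symm hba)
      exact Relation.ReflTransGen.single
        ⟨Ne.symm hba, f, Finset.mem_erase.mpr ⟨hfe, hf⟩, ha, hbf⟩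
    · rintro rfl
      exact ⟨he, subset_rfl⟩
  refine ⟨?_, ⟨hincsub, ?_, ?_, ?_⟩, hedges, ?_⟩
  · -- IsBridge
    unfold FinHypergraph.IsBridge
    rw [ncomp_eraseEdge G hG e he hne3 hsep, ncomp_connected G hG hvertsne]
    omega
  · -- induced connected
    intro u hu v hv
    by_cases huv : u = v
    · subst huv; exact Relation.ReflTransGen.refl
    · exact Relation.ReflTransGen.single
        ⟨huv, e, Finset.mem_filter.mpr ⟨he, subset_rfl⟩, hu, hv⟩
  · -- no separating vertex of the induced subhypergraph
    intro v hv
    obtain ⟨A, B, hAB, hint, hA2, hB2, hedge⟩ := hv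
    have heF : e ∈ (G.induce (G.inc e)).edges := Finset.mem_filter.mpr ⟨he, subset_rfl⟩
    have hABe : A ∪ B = G.inc e := hAB
    rcases hedge e heF with hcase | hcase
    · -- inc e ⊆ A, so B ⊆ A ∩ B = {v}
      have hBsub : B ⊆ A ∩ B := by
        intro b hb
        have hbe : b ∈ G.inc e := by rw [← hABe]; exact Finset.mem_union_right _ hb
        exact Finset.mem_inter.mpr ⟨hcase hbe, hb⟩
      rw [hint] at hBsub
      have := Finset.card_le_card hBsub
      rw [Finset.card_singleton] at this
      omega
    · have hAsub : A ⊆ A ∩ B := by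
        intro a ha
        have hae : a ∈ G.inc e := by rw [← hABe]; exact Finset.mem_union_left _ ha
        exact Finset.mem_inter.mpr ⟨ha, hcase hae⟩
      rw [hint] at hAsub
      have := Finset.card_le_card hAsub
      rw [Finset.card_singleton] at this
      omega
  · -- maximality
    intro S' hsub' hS'v hconn' hnosep'
    by_contra hne'
    have hss : G.inc e ⊂ S' := ⟨hsub', fun h => hne' (Finset.Subset.antisymm h hsub')⟩
    obtain ⟨y, hyS, hynot⟩ := Finset.exists_of_ssubset hss
    have hyV : y ∈ G.verts := hS'v hyS
    obtain ⟨vy, hvye, hvypath⟩ := reach_inc G hG e he hne3 y hyV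
    apply hnosep' vy
    set Cy : Finset α :=
      G.verts.filter (fun t => Relation.ReflTransGen (G.eraseEdge e).Adj t vy) with hCy_def
    have hvyV : vy ∈ G.verts := G.inc_sub e he hvye
    have hvyCy : vy ∈ Cy := by
      rw [hCy_def, Finset.mem_filter]
      exact ⟨hvyV, Relation.ReflTransGen.refl⟩
    have hyCy : y ∈ Cy := by
      rw [hCy_def, Finset.mem_filter]
      exact ⟨hyV, hvypath⟩
    have hincCy : ∀ t ∈ G.inc e, t ≠ vy → t ∉ Cy := by
      intro t ht htv hmem
      rw [hCy_def, Finset.mem_filter] at hmem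
      exact hsep t ht vy hvye htv hmem.2
    refine ⟨S'.filter (· ∈ Cy), (S'.filter (· ∉ Cy)) ∪ {vy}, ?_, ?_, ?_, ?_, ?_⟩
    · -- union is S'
      ext a
      simp only [Finset.mem_union, Finset.mem_filter, Finset.mem_singleton]
      constructor
      · rintro (⟨h1, _⟩ | ⟨h1, _⟩ | rfl)
        · exact h1
        · exact h1
        · exact hsub' hvye
      · intro ha
        by_cases hac : a ∈ Cy
        · exact Or.inl ⟨ha, hac⟩
        · exact Or.inr (Or.inl ⟨ha, hac⟩)
    · -- intersection is {vy}
      ext a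
      simp only [Finset.mem_inter, Finset.mem_union, Finset.mem_filter,
        Finset.mem_singleton]
      constructor
      · rintro ⟨⟨h1, h2⟩, ⟨h3, h4⟩ | rfl⟩
        · exact absurd h2 h4
        · rfl
      · rintro rfl
        exact ⟨⟨hsub' hvye, hvyCy⟩, Or.inr rfl⟩
    · -- card A ≥ 2
      have hpair : ({y, vy} : Finset α) ⊆ S'.filter (· ∈ Cy) := by
        intro a ha
        rcases Finset.mem_insert.mp ha with rfl | ha'
        · exact Finset.mem_filter.mpr ⟨hyS, hyCy⟩
        · rw [Finset.mem_singleton.mp ha']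
          exact Finset.mem_filter.mpr ⟨hsub' hvye, hvyCy⟩
      have hyvy : y ≠ vy := fun hh => hynot (hh ▸ hvye)
      calc 2 = ({y, vy} : Finset α).card := (Finset.card_pair hyvy).symm
        _ ≤ _ := Finset.card_le_card hpair
    · -- card B ≥ 2
      obtain ⟨z', hz'⟩ := Finset.card_pos.mp
        (show 0 < ((G.inc e).erase vy).card by rw [Finset.card_erase_of_mem hvye]; omega)
      obtain ⟨hz'v, hz'e⟩ := Finset.mem_erase.mp hz'
      have hpair : ({z', vy} : Finset α) ⊆ (S'.filter (· ∉ Cy)) ∪ {vy} := by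
        intro a ha
        rcases Finset.mem_insert.mp ha with rfl | ha'
        · exact Finset.mem_union_left _
            (Finset.mem_filter.mpr ⟨hsub' hz'e, hincCy _ hz'e hz'v⟩)
        · rw [Finset.mem_singleton.mp ha']
          exact Finset.mem_union_right _ (Finset.mem_singleton.mpr rfl)
      calc 2 = ({z', vy} : Finset α).card := (Finset.card_pair hz'v).symm
        _ ≤ _ := Finset.card_le_card hpair
    · -- every edge is inside A or inside B
      intro f hf
      have hf' := Finset.mem_filter.mp hf
      obtain ⟨hfG, hfsub⟩ := hf'
      by_cases hfe : f = e
      · right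
        subst hfe
        intro t ht
        by_cases htv : t = vy
        · exact Finset.mem_union_right _ (Finset.mem_singleton.mpr htv)
        · exact Finset.mem_union_left _
            (Finset.mem_filter.mpr ⟨hfsub ht, hincCy t ht htv⟩)
      · by_cases hxc : ∃ t ∈ G.inc f, t ∈ Cy
        · left
          obtain ⟨t, htf, htC⟩ := hxc
          intro a haf
          refine Finset.mem_filter.mpr ⟨hfsub haf, ?_⟩
          by_cases hat : a = t
          · exact hat ▸ htC
          · rw [hCy_def, Finset.mem_filter] at htC ⊢
            refine ⟨G.inc_sub f hfG haf, ?_⟩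
            exact Relation.ReflTransGen.head
              ⟨hat, f, Finset.mem_erase.mpr ⟨hfe, hfG⟩, haf, htf⟩ htC.2
        · right
          push_neg at hxc
          intro a haf
          exact Finset.mem_union_left _
            (Finset.mem_filter.mpr ⟨hfsub haf, hxc a haf⟩)
  · -- no parallel edges
    intro e' he' hne heq
    have : e' ∈ (G.induce (G.inc e)).edges :=
      Finset.mem_filter.mpr ⟨he', le_of_eq heq⟩
    rw [hedges, Finset.mem_singleton] at this
    exact hne this
end
end

section
/- Let (G,X,H) be obtained from two disjoint degree-feasible configurations (G¹,X¹,H¹) and (G²,X²,H²) by merging vertices v¹ ∈ V(G¹) and v² ∈ V(G²) to a new vertex v*. Then (G,X,H) is minimal uncolorable if and only if both (G¹,X¹,H¹) and (G²,X²,H²) are minimal uncolorable. -/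
open Finset

noncomputable section
open scoped Classical

variable {α β : Type} [DecidableEq α] [DecidableEq β]

open FinHypergraph

section MergeAux

/-- BFS balls inside a vertex set `U`, starting from `v`. -/
private def ballAux (G : FinHypergraph α) (U : Finset α) (v : α) : ℕ → Finset α
  | 0 => {v}
  | n + 1 => ballAux G U v n ∪ U.filter (fun x => ∃ w ∈ ballAux G U v n, G.Adj w x)

private lemma ballAux_mono (G : FinHypergraph α) (U : Finset α) (v : α) {m n : ℕ}
    (h : m ≤ n) : ballAux G U v m ⊆ ballAux G U v n := by
  induction n with
  | zero => rw [Nat.le_zero.mp h]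
  | succ n ih =>
    rcases Nat.lt_succ_iff_lt_or_eq.mp (Nat.lt_succ_of_le h) with h' | h'
    · exact (ih (Nat.lt_succ_iff.mp h')).trans Finset.subset_union_left
    · rw [h']

private lemma ballAux_subset (G : FinHypergraph α) (U : Finset α) (v : α) (hv : v ∈ U)
    (n : ℕ) : ballAux G U v n ⊆ U := by
  induction n with
  | zero => simpa [ballAux] using hv
  | succ n ih => exact Finset.union_subset ih (Finset.filter_subset _ _)

/-- Greedy coloring: a connected degree-feasible configuration always admits an
independent set covering every vertex except a chosen one, using no color of that one. -/
private lemma exists_deficient (G : FinHypergraph α) (X : α → Finset β) (H : FinHypergraph β)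
    (hc : G.Connected) (hcov : IsCover G X H)
    (hdeg : ∀ w ∈ G.verts, G.degree w ≤ (X w).card)
    (v : α) (hv : v ∈ G.verts) :
    ∃ T : Finset β, H.IndepSet T ∧ T ⊆ (G.verts.erase v).biUnion X ∧
      ∀ u ∈ G.verts.erase v, (T ∩ X u).card = 1 := by
  obtain ⟨hdisj, hHverts, hindX, M, hMprop, hMeq⟩ := hcov
  have main : ∀ n (U : Finset α), U.card ≤ n → v ∈ U → U ⊆ G.verts →
      (∀ x ∈ U, ∃ k, x ∈ ballAux G U v k) →
      (∃ T : Finset β, H.IndepSet T ∧ T ⊆ (G.verts \ U).biUnion X ∧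
        ∀ u ∈ G.verts \ U, (T ∩ X u).card = 1) →
      (∃ T : Finset β, H.IndepSet T ∧ T ⊆ (G.verts \ {v}).biUnion X ∧
        ∀ u ∈ G.verts \ {v}, (T ∩ X u).card = 1) := by
    intro n
    induction n with
    | zero =>
      intro U hcard hvU _ _ _
      exact absurd (Finset.card_pos.mpr ⟨v, hvU⟩) (by omega)
    | succ n ih =>
      intro U hcard hvU hUsub hinv hP
      by_cases hUv : U = {v}
      · rw [hUv] at hP; exact hP
      have hne : (U.erase v).Nonempty := by
        by_contra hcon
        rw [Finset.not_nonempty_iff_eq_empty] at hcon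
        apply hUv
        apply Finset.Subset.antisymm
        · intro x hx
          by_cases hxv : x = v
          · simp [hxv]
          · exact absurd (Finset.mem_erase.mpr ⟨hxv, hx⟩) (by simp [hcon])
        · simpa using hvU
      classical
      set dist : α → ℕ := fun x => sInf {k | x ∈ ballAux G U v k} with hdistdef
      obtain ⟨u, huev, hmax⟩ := Finset.exists_max_image (U.erase v) dist hne
      obtain ⟨huv, huU⟩ := Finset.mem_erase.mp huev
      have hinvset : ∀ x ∈ U, {k | x ∈ ballAux G U v k}.Nonempty := fun x hx => hinv x hx
      have humem : u ∈ ballAux G U v (dist u) := Nat.sInf_mem (hinvset u huU)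
      have hdu_pos : dist u ≠ 0 := by
        intro h0
        rw [h0] at humem
        exact huv (Finset.mem_singleton.mp humem)
      obtain ⟨m, hm⟩ : ∃ m, dist u = m + 1 := ⟨dist u - 1, by omega⟩
      have hlow : ∀ k, k < dist u → u ∉ ballAux G U v k := by
        intro k hk hkm
        exact Nat.notMem_of_lt_sInf hk hkm
      have hum1 : u ∉ ballAux G U v m := hlow m (by omega)
      have humem' : u ∈ ballAux G U v (m + 1) := by rw [← hm]; exact humem
      have hufil : u ∈ U.filter (fun x => ∃ w ∈ ballAux G U v m, G.Adj w x) := by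
        rcases Finset.mem_union.mp humem' with h' | h'
        · exact absurd h' hum1
        · exact h'
      obtain ⟨-, w, hwball, hadj⟩ := Finset.mem_filter.mp hufil
      have hwU : w ∈ U := ballAux_subset G U v hvU m hwball
      obtain ⟨hwu, e₀, he₀, hw_in, hu_in⟩ := hadj
      -- transfer balls to U.erase u
      have htrans : ∀ k, k ≤ dist u → ∀ x, x ∈ ballAux G U v k → x ≠ u →
          x ∈ ballAux G (U.erase u) v k := by
        intro k
        induction k with
        | zero => intro _ x hx _; exact hx
        | succ k ihk =>
          intro hk x hx hxu
          rcases Finset.mem_union.mp hx with hx' | hx'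
          · exact Finset.mem_union_left _ (ihk (by omega) x hx' hxu)
          · obtain ⟨hxU, w', hw', hadj'⟩ := Finset.mem_filter.mp hx'
            have hw'u : w' ≠ u := by
              intro hh
              rw [hh] at hw'
              exact hlow k (by omega) hw'
            exact Finset.mem_union_right _ (Finset.mem_filter.mpr
              ⟨Finset.mem_erase.mpr ⟨hxu, hxU⟩,
                ⟨w', ihk (by omega) w' hw' hw'u, hadj'⟩⟩)
      have hinv' : ∀ x ∈ U.erase u, ∃ k, x ∈ ballAux G (U.erase u) v k := by
        intro x hx
        obtain ⟨hxu, hxU⟩ := Finset.mem_erase.mp hx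
        have hdx : dist x ≤ dist u := by
          by_cases hxv : x = v
          · have h0 : dist x = 0 := by
              rw [hxv]
              exact Nat.sInf_eq_zero.mpr (Or.inl (by simp [ballAux]))
            omega
          · exact hmax x (Finset.mem_erase.mpr ⟨hxv, hxU⟩)
        exact ⟨dist x, htrans (dist x) hdx x (Nat.sInf_mem (hinvset x hxU)) hxu⟩
      -- greedy step
      obtain ⟨T, hTind, hTsub, hTcov⟩ := hP
      have huverts : u ∈ G.verts := hUsub huU
      have hwverts : w ∈ G.verts := hUsub hwU
      have hTXempty : ∀ z, z ∈ U → T ∩ X z = ∅ := by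
        intro z hz
        rw [Finset.eq_empty_iff_forall_notMem]
        intro y hy
        obtain ⟨hyT, hyX⟩ := Finset.mem_inter.mp hy
        obtain ⟨t, ht, hyt⟩ := Finset.mem_biUnion.mp (hTsub hyT)
        obtain ⟨htverts, htU⟩ := Finset.mem_sdiff.mp ht
        have htz : t ≠ z := fun hh => htU (hh ▸ hz)
        exact (Finset.disjoint_left.mp (hdisj t htverts z (hUsub hz) htz)) hyt hyX
      have hgood : ∃ x ∈ X u, ¬ (∃ e' ∈ H.edges, x ∈ H.inc e' ∧ H.inc e' \ {x} ⊆ T) := by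
        by_contra hcon
        push_neg at hcon
        -- choose for each color a bad hyperedge and its generating edge
        have hall : ∀ x : β, ∃ e', x ∈ X u →
            e' ∈ H.edges ∧ x ∈ H.inc e' ∧ H.inc e' \ {x} ⊆ T := by
          intro x
          by_cases hx : x ∈ X u
          · obtain ⟨e', he', h1, h2⟩ := hcon x hx
            exact ⟨e', fun _ => ⟨he', h1, h2⟩⟩
          · exact ⟨0, fun hh => absurd hh hx⟩
        choose E' hE' using hall
        have hall2 : ∀ x : β, ∃ e, x ∈ X u → e ∈ G.edges ∧ E' x ∈ M e := by
          intro x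
          by_cases hx : x ∈ X u
          · have hmem : E' x ∈ H.edges := (hE' x hx).1
            rw [hMeq] at hmem
            obtain ⟨e, he, hmm⟩ := Finset.mem_biUnion.mp hmem
            exact ⟨e, fun _ => ⟨he, hmm⟩⟩
          · exact ⟨0, fun hh => absurd hh hx⟩
        choose F hF using hall2
        have hFin : ∀ x ∈ X u, u ∈ G.inc (F x) := by
          intro x hx
          obtain ⟨heF, hmm⟩ := hF x hx
          have hsub2 : H.inc (E' x) ⊆ (G.inc (F x)).biUnion X :=
            ((hMprop (F x) heF).2.1 (E' x) hmm).2
          obtain ⟨z, hz, hxz⟩ := Finset.mem_biUnion.mp (hsub2 (hE' x hx).2.1)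
          have hzverts : z ∈ G.verts := G.inc_sub (F x) heF hz
          by_cases hzu : z = u
          · rw [← hzu]; exact hz
          · exact absurd hx (Finset.disjoint_left.mp (hdisj z hzverts u huverts hzu) hxz)
        have hFne : ∀ x ∈ X u, F x ≠ e₀ := by
          intro x hx hFe
          obtain ⟨heF, hmm⟩ := hF x hx
          rw [hFe] at hmm
          have hcard1 : (H.inc (E' x) ∩ X w).card = 1 :=
            ((hMprop e₀ he₀).2.1 (E' x) hmm).1 w hw_in
          obtain ⟨y, hy⟩ := Finset.card_eq_one.mp hcard1
          have hyin : y ∈ H.inc (E' x) ∩ X w := by rw [hy]; exact Finset.mem_singleton_self y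
          obtain ⟨hy1, hy2⟩ := Finset.mem_inter.mp hyin
          have hyx : y ≠ x := by
            intro hh
            rw [hh] at hy2
            exact (Finset.disjoint_left.mp (hdisj w hwverts u huverts hwu)) hy2 hx
          have hyT : y ∈ T := (hE' x hx).2.2 (Finset.mem_sdiff.mpr ⟨hy1, by simp [hyx]⟩)
          have : y ∈ T ∩ X w := Finset.mem_inter.mpr ⟨hyT, hy2⟩
          rw [hTXempty w hwU] at this
          exact absurd this (Finset.notMem_empty y)
        -- pigeonhole
        have he₀fil : e₀ ∈ G.edges.filter (fun e => u ∈ G.inc e) :=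
          Finset.mem_filter.mpr ⟨he₀, hu_in⟩
        have hdegu : G.degree u = (G.edges.filter (fun e => u ∈ G.inc e)).card := rfl
        have htcard : ((G.edges.filter (fun e => u ∈ G.inc e)).erase e₀).card
            < (X u).card := by
          rw [Finset.card_erase_of_mem he₀fil]
          have h1 := hdeg u huverts
          have h2 : 1 ≤ (G.edges.filter (fun e => u ∈ G.inc e)).card :=
            Finset.card_pos.mpr ⟨e₀, he₀fil⟩
          rw [hdegu] at h1
          omega
        have hmaps : ∀ x ∈ X u, F x ∈ (G.edges.filter (fun e => u ∈ G.inc e)).erase e₀ := by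
          intro x hx
          exact Finset.mem_erase.mpr ⟨hFne x hx,
            Finset.mem_filter.mpr ⟨(hF x hx).1, hFin x hx⟩⟩
        obtain ⟨x, hx, y, hy, hxy, hFxy⟩ :=
          Finset.exists_ne_map_eq_of_card_lt_of_maps_to htcard hmaps
        -- derive the contradiction
        obtain ⟨heFx, hmmx⟩ := hF x hx
        obtain ⟨heFy, hmmy⟩ := hF y hy
        rw [hFxy] at hmmx heFx
        by_cases hEE : E' x = E' y
        · have hcard1 : (H.inc (E' x) ∩ X u).card = 1 :=
            ((hMprop (F y) heFx).2.1 (E' x) hmmx).1 u (hFin y hy)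
          have hxin : x ∈ H.inc (E' x) ∩ X u :=
            Finset.mem_inter.mpr ⟨(hE' x hx).2.1, hx⟩
          have hyin : y ∈ H.inc (E' x) ∩ X u := by
            rw [hEE]
            exact Finset.mem_inter.mpr ⟨(hE' y hy).2.1, hy⟩
          obtain ⟨t, ht⟩ := Finset.card_eq_one.mp hcard1
          rw [ht] at hxin hyin
          exact hxy ((Finset.mem_singleton.mp hxin).trans
            (Finset.mem_singleton.mp hyin).symm)
        · have hdisjE : Disjoint (H.inc (E' x)) (H.inc (E' y)) :=
            (hMprop (F y) heFy).2.2 (E' x) hmmx (E' y) hmmy hEE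
          have hcard2 : 1 < (G.inc (F y)).card := by
            have := G.inc_card (F y) heFy
            omega
          obtain ⟨w', hw'mem, hw'ne⟩ := Finset.exists_mem_ne hcard2 u
          have hw'verts : w' ∈ G.verts := G.inc_sub (F y) heFy hw'mem
          have hcx : (H.inc (E' x) ∩ X w').card = 1 :=
            ((hMprop (F y) heFx).2.1 (E' x) hmmx).1 w' hw'mem
          have hcy : (H.inc (E' y) ∩ X w').card = 1 :=
            ((hMprop (F y) heFy).2.1 (E' y) hmmy).1 w' hw'mem
          obtain ⟨yx, hyx⟩ := Finset.card_eq_one.mp hcx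
          obtain ⟨yy, hyy⟩ := Finset.card_eq_one.mp hcy
          have hyxin : yx ∈ H.inc (E' x) ∩ X w' := by
            rw [hyx]; exact Finset.mem_singleton_self yx
          have hyyin : yy ∈ H.inc (E' y) ∩ X w' := by
            rw [hyy]; exact Finset.mem_singleton_self yy
          obtain ⟨hyx1, hyx2⟩ := Finset.mem_inter.mp hyxin
          obtain ⟨hyy1, hyy2⟩ := Finset.mem_inter.mp hyyin
          have hyxT : yx ∈ T := by
            apply (hE' x hx).2.2
            refine Finset.mem_sdiff.mpr ⟨hyx1, ?_⟩
            simp only [Finset.mem_singleton]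
            intro hh
            rw [hh] at hyx2
            exact (Finset.disjoint_left.mp (hdisj w' hw'verts u huverts hw'ne)) hyx2 hx
          have hyyT : yy ∈ T := by
            apply (hE' y hy).2.2
            refine Finset.mem_sdiff.mpr ⟨hyy1, ?_⟩
            simp only [Finset.mem_singleton]
            intro hh
            rw [hh] at hyy2
            exact (Finset.disjoint_left.mp (hdisj w' hw'verts u huverts hw'ne)) hyy2 hy
          by_cases hw'U : w' ∈ U
          · have := Finset.mem_inter.mpr ⟨hyxT, hyx2⟩
            rw [hTXempty w' hw'U] at this
            exact absurd this (Finset.notMem_empty yx)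
          · have hcc := hTcov w' (Finset.mem_sdiff.mpr ⟨hw'verts, hw'U⟩)
            obtain ⟨t, ht⟩ := Finset.card_eq_one.mp hcc
            have h1 : yx ∈ ({t} : Finset β) := ht ▸ Finset.mem_inter.mpr ⟨hyxT, hyx2⟩
            have h2 : yy ∈ ({t} : Finset β) := ht ▸ Finset.mem_inter.mpr ⟨hyyT, hyy2⟩
            have : yx = yy := (Finset.mem_singleton.mp h1).trans
              (Finset.mem_singleton.mp h2).symm
            rw [this] at hyx1
            exact (Finset.disjoint_left.mp hdisjE) hyx1 hyy1
      -- extend T by a good color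
      obtain ⟨x, hxXu, hxgood⟩ := hgood
      have hTXu : T ∩ X u = ∅ := hTXempty u huU
      have hxT : x ∉ T := by
        intro hh
        have : x ∈ T ∩ X u := Finset.mem_inter.mpr ⟨hh, hxXu⟩
        rw [hTXu] at this
        exact absurd this (Finset.notMem_empty x)
      refine ih (U.erase u) ?_ (Finset.mem_erase.mpr ⟨Ne.symm huv, hvU⟩)
        ((Finset.erase_subset u U).trans hUsub) hinv' ⟨insert x T, ?_, ?_, ?_⟩
      · rw [Finset.card_erase_of_mem huU]
        omega
      · -- independence
        intro f hf hsub
        by_cases hxf : x ∈ H.inc f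
        · apply hxgood
          refine ⟨f, hf, hxf, ?_⟩
          intro y hy
          obtain ⟨hy1, hy2⟩ := Finset.mem_sdiff.mp hy
          rcases Finset.mem_insert.mp (hsub hy1) with hh | hh
          · exact absurd hh (by simpa using hy2)
          · exact hh
        · apply hTind f hf
          intro y hy
          rcases Finset.mem_insert.mp (hsub hy) with hh | hh
          · exact absurd (hh ▸ hy) hxf
          · exact hh
      · -- subset
        intro y hy
        rcases Finset.mem_insert.mp hy with hh | hh
        · exact Finset.mem_biUnion.mpr ⟨u, Finset.mem_sdiff.mpr
            ⟨huverts, Finset.notMem_erase u U⟩, hh ▸ hxXu⟩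
        · obtain ⟨z, hz, hyz⟩ := Finset.mem_biUnion.mp (hTsub hh)
          obtain ⟨hz1, hz2⟩ := Finset.mem_sdiff.mp hz
          exact Finset.mem_biUnion.mpr ⟨z, Finset.mem_sdiff.mpr
            ⟨hz1, fun hc => hz2 (Finset.mem_of_mem_erase hc)⟩, hyz⟩
      · -- coverage
        intro z hz
        obtain ⟨hzverts, hznU⟩ := Finset.mem_sdiff.mp hz
        by_cases hzu : z = u
        · rw [hzu, Finset.insert_inter_of_mem hxXu, hTXu]
          simp
        · have hznU' : z ∉ U := fun hh => hznU (Finset.mem_erase.mpr ⟨hzu, hh⟩)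
          rw [Finset.insert_inter_of_notMem]
          · exact hTcov z (Finset.mem_sdiff.mpr ⟨hzverts, hznU'⟩)
          · intro hh
            exact (Finset.disjoint_left.mp (hdisj u huverts z hzverts
              (fun h => hzu h.symm))) hxXu hh
  have hinv0 : ∀ x, Relation.ReflTransGen G.Adj v x → ∃ k, x ∈ ballAux G G.verts v k := by
    intro x hr
    induction hr with
    | refl => exact ⟨0, Finset.mem_singleton_self v⟩
    | @tail b c hab hbc ihab =>
      obtain ⟨k, hk⟩ := ihab
      obtain ⟨hne, e, he, hb, hcmem⟩ := hbc
      exact ⟨k + 1, Finset.mem_union_right _ (Finset.mem_filter.mpr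
        ⟨G.inc_sub e he hcmem, ⟨b, hk, hne, e, he, hb, hcmem⟩⟩)⟩
  have hbase : ∃ T : Finset β, H.IndepSet T ∧ T ⊆ (G.verts \ G.verts).biUnion X ∧
      ∀ u ∈ G.verts \ G.verts, (T ∩ X u).card = 1 := by
    refine ⟨∅, ?_, by simp, by simp⟩
    intro e he hsub
    have h2 := H.inc_card e he
    have : H.inc e = ∅ := Finset.subset_empty.mp hsub
    rw [this] at h2
    simp at h2
  obtain ⟨T, h1, h2, h3⟩ := main G.verts.card G.verts le_rfl hv subset_rfl
    (fun x hx => hinv0 x (hc v hv x hx)) hbase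
  rw [Finset.sdiff_singleton_eq_erase] at h2 h3
  exact ⟨T, h1, h2, h3⟩


private lemma isMergeOf_symm {G G₁ G₂ : FinHypergraph α} {X X₁ X₂ : α → Finset β}
    {H H₁ H₂ : FinHypergraph β} {v₁ v₂ vs : α}
    (hm : IsMergeOf G X H G₁ X₁ H₁ G₂ X₂ H₂ v₁ v₂ vs) :
    IsMergeOf G X H G₂ X₂ H₂ G₁ X₁ H₁ v₂ v₁ vs := by
  obtain ⟨d1, d2, d3, d4, m1, m2, m3, gv, ge, gi1, gi2, hv, he, hi1, hi2, xs, x1, x2⟩ := hm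
  refine ⟨d1.symm, d2.symm, d3.symm, d4.symm, m2, m1, ?_, ?_, ?_, gi2, gi1, ?_, ?_,
    hi2, hi1, ?_, x2, x1⟩
  · rw [Finset.union_comm]; exact m3
  · rw [gv, Finset.union_comm G₁.verts G₂.verts, Finset.erase_right_comm]
  · rw [ge, Finset.union_comm]
  · rw [hv, Finset.union_comm]
  · rw [he, Finset.union_comm]
  · rw [xs, Finset.union_comm]

/-- Combining a full transversal on the first part with a `v₂`-deficient independent set
on the second part. -/
private lemma combine_lemma {G G₁ G₂ : FinHypergraph α} {X X₁ X₂ : α → Finset β}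
    {H H₁ H₂ : FinHypergraph β} {v₁ v₂ vs : α}
    (hm : IsMergeOf G X H G₁ X₁ H₁ G₂ X₂ H₂ v₁ v₂ vs)
    (hC1 : IsCover G₁ X₁ H₁) (hC2 : IsCover G₂ X₂ H₂)
    (E : Finset ℕ) (hE : E ⊆ H.edges)
    (T₁ T₂ : Finset β)
    (h1 : ∀ f ∈ H₁.edges, f ∈ E → ¬ H₁.inc f ⊆ T₁)
    (h2 : ∀ f ∈ H₂.edges, ¬ H₂.inc f ⊆ T₂)
    (hT1cov : ∀ u ∈ G₁.verts, (T₁ ∩ X₁ u).card = 1)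
    (hT2sub : T₂ ⊆ (G₂.verts.erase v₂).biUnion X₂)
    (hT2cov : ∀ u ∈ G₂.verts.erase v₂, (T₂ ∩ X₂ u).card = 1) :
    ∃ T : Finset β, (∀ f ∈ E, ¬ H.inc f ⊆ T) ∧ ∀ w ∈ G.verts, (T ∩ X w).card = 1 := by
  obtain ⟨d1, d2, d3, d4, m1, m2, m3, gv, ge, gi1, gi2, hv, he, hi1, hi2, xs, x1, x2⟩ := hm
  have hX1sub : ∀ z ∈ G₁.verts, X₁ z ⊆ H₁.verts := by
    intro z hz y hy
    rw [hC1.2.1]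
    exact Finset.mem_biUnion.mpr ⟨z, hz, hy⟩
  have hX2sub : ∀ z ∈ G₂.verts, X₂ z ⊆ H₂.verts := by
    intro z hz y hy
    rw [hC2.2.1]
    exact Finset.mem_biUnion.mpr ⟨z, hz, hy⟩
  have hT2H : T₂ ⊆ H₂.verts := by
    intro y hy
    obtain ⟨z, hz, hyz⟩ := Finset.mem_biUnion.mp (hT2sub hy)
    exact hX2sub z (Finset.mem_of_mem_erase hz) hyz
  have hT2v2 : ∀ y ∈ T₂, y ∉ X₂ v₂ := by
    intro y hy hyv
    obtain ⟨z, hz, hyz⟩ := Finset.mem_biUnion.mp (hT2sub hy)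
    obtain ⟨hzne, hzmem⟩ := Finset.mem_erase.mp hz
    exact (Finset.disjoint_left.mp (hC2.1 z hzmem v₂ m2 hzne)) hyz hyv
  refine ⟨(T₁ ∩ H₁.verts) ∪ T₂, ?_, ?_⟩
  · intro f hf hsub
    have hfH : f ∈ H.edges := hE hf
    rw [he] at hfH
    rcases Finset.mem_union.mp hfH with hf1 | hf2
    · apply h1 f hf1 hf
      rw [hi1 f hf1] at hsub
      intro y hy
      rcases Finset.mem_union.mp (hsub hy) with hh | hh
      · exact (Finset.mem_inter.mp hh).1
      · exact absurd (hT2H hh) (Finset.disjoint_left.mp d3 (H₁.inc_sub f hf1 hy))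
    · apply h2 f hf2
      rw [hi2 f hf2] at hsub
      intro y hy
      rcases Finset.mem_union.mp (hsub hy) with hh | hh
      · exact absurd (Finset.mem_inter.mp hh).2
          (Finset.disjoint_right.mp d3 (H₂.inc_sub f hf2 hy))
      · exact hh
  · intro z hz
    rw [gv] at hz
    rcases Finset.mem_insert.mp hz with hzvs | hz'
    · -- z = vs
      rw [hzvs, xs]
      have hset : ((T₁ ∩ H₁.verts) ∪ T₂) ∩ (X₁ v₁ ∪ X₂ v₂) = T₁ ∩ X₁ v₁ := by
        ext y
        simp only [Finset.mem_inter, Finset.mem_union]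
        constructor
        · rintro ⟨hy1 | hy1, hy2 | hy2⟩
          · exact ⟨hy1.1, hy2⟩
          · exact absurd (hX2sub v₂ m2 hy2)
              (Finset.disjoint_left.mp d3 hy1.2)
          · exact absurd (hX1sub v₁ m1 hy2)
              (Finset.disjoint_right.mp d3 (hT2H hy1))
          · exact absurd hy2 (hT2v2 y hy1)
        · rintro ⟨hy1, hy2⟩
          exact ⟨Or.inl ⟨hy1, hX1sub v₁ m1 hy2⟩, Or.inl hy2⟩
      rw [hset]
      exact hT1cov v₁ m1
    · obtain ⟨hzv₂, hz''⟩ := Finset.mem_erase.mp hz'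
      obtain ⟨hzv₁, hz3⟩ := Finset.mem_erase.mp hz''
      rcases Finset.mem_union.mp hz3 with hz1 | hz2
      · rw [x1 z (Finset.mem_erase.mpr ⟨hzv₁, hz1⟩)]
        have hset : ((T₁ ∩ H₁.verts) ∪ T₂) ∩ X₁ z = T₁ ∩ X₁ z := by
          ext y
          simp only [Finset.mem_inter, Finset.mem_union]
          constructor
          · rintro ⟨hy1 | hy1, hy2⟩
            · exact ⟨hy1.1, hy2⟩
            · exact absurd (hX1sub z hz1 hy2)
                (Finset.disjoint_right.mp d3 (hT2H hy1))
          · rintro ⟨hy1, hy2⟩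
            exact ⟨Or.inl ⟨hy1, hX1sub z hz1 hy2⟩, hy2⟩
        rw [hset]
        exact hT1cov z hz1
      · rw [x2 z (Finset.mem_erase.mpr ⟨hzv₂, hz2⟩)]
        have hset : ((T₁ ∩ H₁.verts) ∪ T₂) ∩ X₂ z = T₂ ∩ X₂ z := by
          ext y
          simp only [Finset.mem_inter, Finset.mem_union]
          constructor
          · rintro ⟨hy1 | hy1, hy2⟩
            · exact absurd (hX2sub z hz2 hy2)
                (Finset.disjoint_left.mp d3 hy1.2)
            · exact ⟨hy1, hy2⟩
          · rintro ⟨hy1, hy2⟩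
            exact ⟨Or.inr hy1, hy2⟩
        rw [hset]
        exact hT2cov z (Finset.mem_erase.mpr ⟨hzv₂, hz2⟩)

/-- Splitting a transversal of the merged configuration. -/
private lemma split_lemma {G G₁ G₂ : FinHypergraph α} {X X₁ X₂ : α → Finset β}
    {H H₁ H₂ : FinHypergraph β} {v₁ v₂ vs : α}
    (hm : IsMergeOf G X H G₁ X₁ H₁ G₂ X₂ H₂ v₁ v₂ vs)
    (hC1 : IsCover G₁ X₁ H₁) (hC2 : IsCover G₂ X₂ H₂)
    (E : Finset ℕ) (T : Finset β)
    (hind : ∀ f ∈ E, ¬ H.inc f ⊆ T)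
    (hcov : ∀ w ∈ G.verts, (T ∩ X w).card = 1) :
    (∃ T₁, (∀ f ∈ H₁.edges, f ∈ E → ¬ H₁.inc f ⊆ T₁) ∧
      ∀ u ∈ G₁.verts, (T₁ ∩ X₁ u).card = 1) ∨
    (∃ T₂, (∀ f ∈ H₂.edges, f ∈ E → ¬ H₂.inc f ⊆ T₂) ∧
      ∀ u ∈ G₂.verts, (T₂ ∩ X₂ u).card = 1) := by
  obtain ⟨d1, d2, d3, d4, m1, m2, m3, gv, ge, gi1, gi2, hv, he, hi1, hi2, xs, x1, x2⟩ := hm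
  have hX1sub : ∀ z ∈ G₁.verts, X₁ z ⊆ H₁.verts := by
    intro z hz y hy
    rw [hC1.2.1]
    exact Finset.mem_biUnion.mpr ⟨z, hz, hy⟩
  have hX2sub : ∀ z ∈ G₂.verts, X₂ z ⊆ H₂.verts := by
    intro z hz y hy
    rw [hC2.2.1]
    exact Finset.mem_biUnion.mpr ⟨z, hz, hy⟩
  have hvs : vs ∈ G.verts := by rw [gv]; exact Finset.mem_insert_self vs _
  have hcvs := hcov vs hvs
  rw [xs] at hcvs
  obtain ⟨t, ht⟩ := Finset.card_eq_one.mp hcvs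
  have htmem : t ∈ T ∩ (X₁ v₁ ∪ X₂ v₂) := ht ▸ Finset.mem_singleton_self t
  obtain ⟨htT, htX⟩ := Finset.mem_inter.mp htmem
  have hGmem1 : ∀ u ∈ G₁.verts, u ≠ v₁ → u ∈ G.verts := by
    intro u hu hne
    rw [gv]
    refine Finset.mem_insert_of_mem (Finset.mem_erase.mpr ⟨?_, Finset.mem_erase.mpr
      ⟨hne, Finset.mem_union_left _ hu⟩⟩)
    intro hh
    exact (Finset.disjoint_left.mp d1 hu) (hh ▸ m2)
  have hGmem2 : ∀ u ∈ G₂.verts, u ≠ v₂ → u ∈ G.verts := by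
    intro u hu hne
    rw [gv]
    refine Finset.mem_insert_of_mem (Finset.mem_erase.mpr ⟨hne, Finset.mem_erase.mpr
      ⟨?_, Finset.mem_union_right _ hu⟩⟩)
    intro hh
    exact (Finset.disjoint_right.mp d1 hu) (hh ▸ m1)
  rcases Finset.mem_union.mp htX with ht1 | ht2
  · left
    refine ⟨T ∩ H₁.verts, ?_, ?_⟩
    · intro f hf1 hfE hsub
      apply hind f hfE
      rw [hi1 f hf1]
      exact hsub.trans Finset.inter_subset_left
    · intro u hu
      have hXsub : X₁ u ⊆ H₁.verts := hX1sub u hu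
      have hset : (T ∩ H₁.verts) ∩ X₁ u = T ∩ X₁ u := by
        ext y
        simp only [Finset.mem_inter]
        exact ⟨fun ⟨⟨a, _⟩, c⟩ => ⟨a, c⟩, fun ⟨a, c⟩ => ⟨⟨a, hXsub c⟩, c⟩⟩
      rw [hset]
      by_cases huv : u = v₁
      · rw [huv]
        apply Finset.card_eq_one.mpr ⟨t, ?_⟩
        apply Finset.Subset.antisymm
        · rw [← ht]
          exact Finset.inter_subset_inter subset_rfl Finset.subset_union_left
        · intro y hy
          rw [Finset.mem_singleton.mp hy]
          exact Finset.mem_inter.mpr ⟨htT, ht1⟩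
      · have := hcov u (hGmem1 u hu huv)
        rwa [x1 u (Finset.mem_erase.mpr ⟨huv, hu⟩)] at this
  · right
    refine ⟨T ∩ H₂.verts, ?_, ?_⟩
    · intro f hf2 hfE hsub
      apply hind f hfE
      rw [hi2 f hf2]
      exact hsub.trans Finset.inter_subset_left
    · intro u hu
      have hXsub : X₂ u ⊆ H₂.verts := hX2sub u hu
      have hset : (T ∩ H₂.verts) ∩ X₂ u = T ∩ X₂ u := by
        ext y
        simp only [Finset.mem_inter]
        exact ⟨fun ⟨⟨a, _⟩, c⟩ => ⟨a, c⟩, fun ⟨a, c⟩ => ⟨⟨a, hXsub c⟩, c⟩⟩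
      rw [hset]
      by_cases huv : u = v₂
      · rw [huv]
        apply Finset.card_eq_one.mpr ⟨t, ?_⟩
        apply Finset.Subset.antisymm
        · rw [← ht]
          exact Finset.inter_subset_inter subset_rfl Finset.subset_union_right
        · intro y hy
          rw [Finset.mem_singleton.mp hy]
          exact Finset.mem_inter.mpr ⟨htT, ht2⟩
      · have := hcov u (hGmem2 u hu huv)
        rwa [x2 u (Finset.mem_erase.mpr ⟨huv, hu⟩)] at this

end MergeAux


/-- a merge of two disjoint degree-feasible configurations is minimal
uncolorable iff both of them are. -/
theorem merge_minUncol_iff (G G₁ G₂ : FinHypergraph α) (X X₁ X₂ : α → Finset β)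
    (H H₁ H₂ : FinHypergraph β) (v₁ v₂ vs : α)
    (h1 : G₁.Connected) (hC1 : IsCover G₁ X₁ H₁)
    (hd1 : ∀ v ∈ G₁.verts, G₁.degree v ≤ (X₁ v).card)
    (h2 : G₂.Connected) (hC2 : IsCover G₂ X₂ H₂)
    (hd2 : ∀ v ∈ G₂.verts, G₂.degree v ≤ (X₂ v).card)
    (hm : IsMergeOf G X H G₁ X₁ H₁ G₂ X₂ H₂ v₁ v₂ vs) :
    MinUncol H G.verts X ↔ MinUncol H₁ G₁.verts X₁ ∧ MinUncol H₂ G₂.verts X₂ := by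
  have hsymm := isMergeOf_symm hm
  obtain ⟨d1, d2, d3, d4, m1, m2, m3, gv, ge, gi1, gi2, hveq, heeq, hhi1, hhi2, xs, x1, x2⟩ :=
    id hm
  obtain ⟨D₂, hD₂ind, hD₂sub, hD₂cov⟩ := exists_deficient G₂ X₂ H₂ h2 hC2 hd2 v₂ m2
  obtain ⟨D₁, hD₁ind, hD₁sub, hD₁cov⟩ := exists_deficient G₁ X₁ H₁ h1 hC1 hd1 v₁ m1
  constructor
  · rintro ⟨hMn, hMe⟩
    refine ⟨⟨?_, ?_⟩, ?_, ?_⟩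
    · rintro ⟨T₁, hT₁ind, hT₁cov⟩
      obtain ⟨T, hTind, hTcov⟩ := combine_lemma hm hC1 hC2 H.edges subset_rfl T₁ D₂
        (fun f hf _ => hT₁ind f hf) hD₂ind hT₁cov hD₂sub hD₂cov
      exact hMn ⟨T, hTind, hTcov⟩
    · intro e he
      have heH : e ∈ H.edges := by rw [heeq]; exact Finset.mem_union_left _ he
      obtain ⟨T, hTind, hTcov⟩ := hMe e heH
      have hTind' : ∀ f ∈ H.edges.erase e, ¬ H.inc f ⊆ T := hTind
      rcases split_lemma hm hC1 hC2 (H.edges.erase e) T hTind' hTcov with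
        ⟨T₁, hi, hc⟩ | ⟨T₂, hi, hc⟩
      · refine ⟨T₁, ?_, hc⟩
        intro f hf
        have hf1 := Finset.mem_of_mem_erase hf
        exact hi f hf1 (Finset.mem_erase.mpr ⟨(Finset.mem_erase.mp hf).1,
          by rw [heeq]; exact Finset.mem_union_left _ hf1⟩)
      · exfalso
        have hT₂full : ∀ f ∈ H₂.edges, ¬ H₂.inc f ⊆ T₂ := by
          intro f hf
          apply hi f hf
          refine Finset.mem_erase.mpr ⟨?_,
            by rw [heeq]; exact Finset.mem_union_right _ hf⟩
          intro hh
          exact (Finset.disjoint_left.mp d4 he) (hh ▸ hf)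
        obtain ⟨T', hT'ind, hT'cov⟩ := combine_lemma hsymm hC2 hC1 H.edges subset_rfl T₂ D₁
          (fun f hf _ => hT₂full f hf) hD₁ind hc hD₁sub hD₁cov
        exact hMn ⟨T', hT'ind, hT'cov⟩
    · rintro ⟨T₂, hT₂ind, hT₂cov⟩
      obtain ⟨T, hTind, hTcov⟩ := combine_lemma hsymm hC2 hC1 H.edges subset_rfl T₂ D₁
        (fun f hf _ => hT₂ind f hf) hD₁ind hT₂cov hD₁sub hD₁cov
      exact hMn ⟨T, hTind, hTcov⟩
    · intro e he
      have heH : e ∈ H.edges := by rw [heeq]; exact Finset.mem_union_right _ he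
      obtain ⟨T, hTind, hTcov⟩ := hMe e heH
      have hTind' : ∀ f ∈ H.edges.erase e, ¬ H.inc f ⊆ T := hTind
      rcases split_lemma hm hC1 hC2 (H.edges.erase e) T hTind' hTcov with
        ⟨T₁, hi, hc⟩ | ⟨T₂, hi, hc⟩
      · exfalso
        have hT₁full : ∀ f ∈ H₁.edges, ¬ H₁.inc f ⊆ T₁ := by
          intro f hf
          apply hi f hf
          refine Finset.mem_erase.mpr ⟨?_,
            by rw [heeq]; exact Finset.mem_union_left _ hf⟩
          intro hh
          exact (Finset.disjoint_right.mp d4 he) (hh ▸ hf)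
        obtain ⟨T', hT'ind, hT'cov⟩ := combine_lemma hm hC1 hC2 H.edges subset_rfl T₁ D₂
          (fun f hf _ => hT₁full f hf) hD₂ind hc hD₂sub hD₂cov
        exact hMn ⟨T', hT'ind, hT'cov⟩
      · refine ⟨T₂, ?_, hc⟩
        intro f hf
        have hf2 := Finset.mem_of_mem_erase hf
        exact hi f hf2 (Finset.mem_erase.mpr ⟨(Finset.mem_erase.mp hf).1,
          by rw [heeq]; exact Finset.mem_union_right _ hf2⟩)
  · rintro ⟨⟨hn1, he1⟩, hn2, he2⟩
    constructor
    · rintro ⟨T, hTind, hTcov⟩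
      rcases split_lemma hm hC1 hC2 H.edges T hTind hTcov with ⟨T₁, hi, hc⟩ | ⟨T₂, hi, hc⟩
      · exact hn1 ⟨T₁, fun f hf => hi f hf
          (by rw [heeq]; exact Finset.mem_union_left _ hf), hc⟩
      · exact hn2 ⟨T₂, fun f hf => hi f hf
          (by rw [heeq]; exact Finset.mem_union_right _ hf), hc⟩
    · intro e heH
      have heH' := heH
      rw [heeq] at heH'
      rcases Finset.mem_union.mp heH' with he | he
      · obtain ⟨T₁, hT₁ind, hT₁cov⟩ := he1 e he
        obtain ⟨T, hTind, hTcov⟩ := combine_lemma hm hC1 hC2 (H.edges.erase e)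
          (Finset.erase_subset e H.edges) T₁ D₂
          (fun f hf1 hfE => hT₁ind f
            (Finset.mem_erase.mpr ⟨(Finset.mem_erase.mp hfE).1, hf1⟩))
          hD₂ind hT₁cov hD₂sub hD₂cov
        exact ⟨T, hTind, hTcov⟩
      · obtain ⟨T₂, hT₂ind, hT₂cov⟩ := he2 e he
        obtain ⟨T, hTind, hTcov⟩ := combine_lemma hsymm hC2 hC1 (H.edges.erase e)
          (Finset.erase_subset e H.edges) T₂ D₁
          (fun f hf2 hfE => hT₂ind f
            (Finset.mem_erase.mpr ⟨(Finset.mem_erase.mp hfE).1, hf2⟩))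
          hD₁ind hT₂cov hD₁sub hD₁cov
        exact ⟨T, hTind, hTcov⟩
end
end
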